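/- arXiv:1711.01514 — 3 statements merged into one kernel-verified Lean document; each statement's English description precedes it below -/
import Mathlib

section
/- In dimension d = 1, form cells by first taking the pairwise disjoint, ordered, bounded intervals I_1(i_1), each containing the single value v_1(i_1), and then merging each maximal block of contiguous cells all of whose data points belong entirely to one common cluster ℓ (i.e., n(i_1) = n_ℓ(i_1) throughout the block); index merged cells by i'_1 and let n_ℓ(i'_1) be the number of points of cluster ℓ in merged cell C(i'_1). Suppose the dither X̃ is generated by drawing a cluster L with P(L = ℓ) = n_ℓ/n and, given L = ℓ, drawing X̃ from any distribution with continuous (atomless) conditional distribution on each merged cell that satisfies P(X̃ ∈ C(i'_1) | L = ℓ) = n_ℓ(i'_1)/n_ℓ for all i'_1 (no uniformity on cells is assumed). Then the output X̂ = G(F_{X̃}(X̃)), where F_{X̃} is the CDF of X̃ and G is the generalized inverse of the empirical CDF, satisfies: conditioned on L = ℓ, X̂ = v_1(i_1) with probability n_ℓ(i_1)/n_ℓ; i.e., the procedure is equivalent to resampling with replacement from the cluster's values with their within-cluster empirical frequencies. -/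
open MeasureTheory Filter
open scoped ENNReal Topology

set_option linter.unusedSectionVars false
set_option linter.unusedTactic false
set_option maxHeartbeats 1000000

section Unif
variable {Ω : Type*} [MeasurableSpace Ω] (P : Measure Ω) [IsProbabilityMeasure P]
  (Xt : Ω → ℝ) (F : ℝ → ℝ)

lemma Fmono (hF : ∀ t, F t = (P {ω | Xt ω ≤ t}).toReal) :
    Monotone F := by
  intro t t' h
  rw [hF, hF]
  exact ENNReal.toReal_mono (measure_ne_top _ _)
    (measure_mono (fun ω hω => le_trans hω h))

lemma Fnonneg (hF : ∀ t, F t = (P {ω | Xt ω ≤ t}).toReal) (t : ℝ) : 0 ≤ F t := by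
  rw [hF]; exact ENNReal.toReal_nonneg

lemma Fle_one (hF : ∀ t, F t = (P {ω | Xt ω ≤ t}).toReal) (t : ℝ) : F t ≤ 1 := by
  rw [hF]
  have h1 : P {ω | Xt ω ≤ t} ≤ 1 := prob_le_one
  calc (P {ω | Xt ω ≤ t}).toReal ≤ (1 : ℝ≥0∞).toReal :=
        ENNReal.toReal_mono (by simp) h1
    _ = 1 := by simp

lemma FofReal (hF : ∀ t, F t = (P {ω | Xt ω ≤ t}).toReal) (t : ℝ) :
    P {ω | Xt ω ≤ t} = ENNReal.ofReal (F t) := by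
  rw [hF, ENNReal.ofReal_toReal (measure_ne_top _ _)]

lemma Funif (hXt : Measurable Xt) (hatom : ∀ t, P {ω | Xt ω = t} = 0)
    (hF : ∀ t, F t = (P {ω | Xt ω ≤ t}).toReal) {u : ℝ} (h0 : 0 < u) (h1 : u < 1) :
    P {ω | F (Xt ω) ≤ u} = ENNReal.ofReal u := by
  have hFm := Fmono P Xt F hF
  set S := {t : ℝ | F t ≤ u} with hS
  -- nonempty
  have hne : S.Nonempty := by
    have hiInt : (⋂ k : ℕ, {ω | Xt ω ≤ -(k : ℝ)}) = ∅ := by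
      ext ω
      simp only [Set.mem_iInter, Set.mem_setOf_eq, Set.mem_empty_iff_false, iff_false, not_forall]
      obtain ⟨k, hk⟩ := exists_nat_gt (-Xt ω)
      exact ⟨k, by push_neg; linarith⟩
    have htend : Tendsto (fun k : ℕ => P {ω | Xt ω ≤ -(k : ℝ)}) atTop (𝓝 0) := by
      have h := tendsto_measure_iInter_atTop (μ := P)
        (s := fun k : ℕ => {ω | Xt ω ≤ -(k : ℝ)})
        (fun k => (hXt measurableSet_Iic).nullMeasurableSet)
        (fun k k' hkk' ω hω => by
          simp only [Set.mem_setOf_eq] at hω ⊢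
          have hc : ((k:ℝ)) ≤ (k':ℝ) := by exact_mod_cast hkk'
          linarith)
        ⟨0, measure_ne_top _ _⟩
      rwa [hiInt, measure_empty] at h
    have hev : ∀ᶠ k : ℕ in atTop, P {ω | Xt ω ≤ -(k : ℝ)} < ENNReal.ofReal u :=
      htend.eventually_lt_const (ENNReal.ofReal_pos.2 h0)
    obtain ⟨k, hk⟩ := hev.exists
    refine ⟨-(k : ℝ), show F (-(k:ℝ)) ≤ u from le_of_lt ?_⟩
    rw [hF]
    exact (ENNReal.lt_ofReal_iff_toReal_lt (measure_ne_top _ _)).1 hk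
  -- bounded above
  have hbdd : BddAbove S := by
    have hiUn : (⋃ k : ℕ, {ω | Xt ω ≤ (k : ℝ)}) = Set.univ := by
      ext ω
      simp only [Set.mem_iUnion, Set.mem_setOf_eq, Set.mem_univ, iff_true]
      obtain ⟨k, hk⟩ := exists_nat_gt (Xt ω)
      exact ⟨k, le_of_lt hk⟩
    have htend : Tendsto (fun k : ℕ => P {ω | Xt ω ≤ (k : ℝ)}) atTop (𝓝 1) := by
      have h := tendsto_measure_iUnion_atTop (μ := P)
        (s := fun k : ℕ => {ω | Xt ω ≤ (k : ℝ)})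
        (fun k k' hkk' ω hω => by
          simp only [Set.mem_setOf_eq] at hω ⊢
          have hc : ((k:ℝ)) ≤ (k':ℝ) := by exact_mod_cast hkk'
          linarith)
      rwa [hiUn, measure_univ] at h
    have hev : ∀ᶠ k : ℕ in atTop, ENNReal.ofReal u < P {ω | Xt ω ≤ (k : ℝ)} :=
      htend.eventually_const_lt (ENNReal.ofReal_lt_one.2 h1)
    obtain ⟨k, hk⟩ := hev.exists
    have hku : u < F (k : ℝ) := by
      rw [FofReal P Xt F hF] at hk
      exact (ENNReal.ofReal_lt_ofReal_iff_of_nonneg (le_of_lt h0)).1 hk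
    refine ⟨(k : ℝ), fun t ht => ?_⟩
    by_contra hc
    push_neg at hc
    exact absurd (le_trans (hFm (le_of_lt hc)) ht) (not_le.2 hku)
  set t0 := sSup S with ht0
  have hlower : ∀ ⦃a t : ℝ⦄, a ∈ S → t ≤ a → t ∈ S := fun a t ha hta =>
    le_trans (hFm hta) ha
  have hnear : ∀ δ : ℝ, 0 < δ → t0 - δ ∈ S := by
    intro δ hδ
    obtain ⟨a, haS, hlt⟩ := exists_lt_of_lt_csSup hne (by linarith : t0 - δ < t0)
    exact hlower haS (le_of_lt hlt)
  -- step 1 : F t0 ≤ u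
  have step1 : F t0 ≤ u := by
    have hsub : {ω | Xt ω ≤ t0} ⊆ (⋃ k : ℕ, {ω | Xt ω ≤ t0 - 1 / (k + 1)}) ∪ {ω | Xt ω = t0} := by
      intro ω hω
      rw [Set.mem_setOf_eq] at hω
      rcases eq_or_lt_of_le hω with heq | hlt
      · exact Or.inr heq
      · obtain ⟨k, hk⟩ := exists_nat_one_div_lt (by linarith : 0 < t0 - Xt ω)
        exact Or.inl (Set.mem_iUnion.2 ⟨k, by simp only [Set.mem_setOf_eq]; push_cast; linarith⟩)
    have hUn : P (⋃ k : ℕ, {ω | Xt ω ≤ t0 - 1 / (k + 1)}) ≤ ENNReal.ofReal u := by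
      have htend := tendsto_measure_iUnion_atTop (μ := P)
        (s := fun k : ℕ => {ω | Xt ω ≤ t0 - 1 / (k + 1)})
        (fun k k' hkk' ω hω => by
          simp only [Set.mem_setOf_eq] at hω ⊢
          have hc : ((k:ℝ)) ≤ (k':ℝ) := by exact_mod_cast hkk'
          have h2 : 1 / ((k' : ℝ) + 1) ≤ 1 / ((k : ℝ) + 1) :=
            one_div_le_one_div_of_le (by positivity) (by linarith)
          linarith)
      refine le_of_tendsto htend (Eventually.of_forall fun k => ?_)
      simp only [Function.comp_apply]
      rw [FofReal P Xt F hF]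
      exact ENNReal.ofReal_le_ofReal (hnear (1 / (k + 1)) (by positivity))
    have := measure_union_le (μ := P) (⋃ k : ℕ, {ω | Xt ω ≤ t0 - 1 / (k + 1)}) {ω | Xt ω = t0}
    have hle : P {ω | Xt ω ≤ t0} ≤ ENNReal.ofReal u := by
      calc P {ω | Xt ω ≤ t0} ≤ P ((⋃ k : ℕ, {ω | Xt ω ≤ t0 - 1 / (k + 1)}) ∪ {ω | Xt ω = t0}) :=
            measure_mono hsub
        _ ≤ P (⋃ k : ℕ, {ω | Xt ω ≤ t0 - 1 / (k + 1)}) + P {ω | Xt ω = t0} := this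
        _ ≤ ENNReal.ofReal u + 0 := add_le_add hUn (le_of_eq (hatom t0))
        _ = ENNReal.ofReal u := by rw [add_zero]
    rw [hF]
    calc (P {ω | Xt ω ≤ t0}).toReal ≤ (ENNReal.ofReal u).toReal :=
          ENNReal.toReal_mono ENNReal.ofReal_ne_top hle
      _ = u := ENNReal.toReal_ofReal (le_of_lt h0)
  -- step 2 : u ≤ F t0
  have step2 : u ≤ F t0 := by
    have hiInt : (⋂ k : ℕ, {ω | Xt ω ≤ t0 + 1 / (k + 1)}) = {ω | Xt ω ≤ t0} := by
      ext ω
      simp only [Set.mem_iInter, Set.mem_setOf_eq]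
      constructor
      · intro h
        by_contra hc
        push_neg at hc
        obtain ⟨k, hk⟩ := exists_nat_one_div_lt (by linarith : 0 < Xt ω - t0)
        exact absurd (h k) (by push_neg; linarith)
      · intro h k
        have : (0:ℝ) < 1 / (k + 1) := by positivity
        linarith
    have htend := tendsto_measure_iInter_atTop (μ := P)
      (s := fun k : ℕ => {ω | Xt ω ≤ t0 + 1 / (k + 1)})
      (fun k => (hXt measurableSet_Iic).nullMeasurableSet)
      (fun k k' hkk' ω hω => by
        simp only [Set.mem_setOf_eq] at hω ⊢
        have hc : ((k:ℝ)) ≤ (k':ℝ) := by exact_mod_cast hkk'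
        have h2 : 1 / ((k' : ℝ) + 1) ≤ 1 / ((k : ℝ) + 1) :=
          one_div_le_one_div_of_le (by positivity) (by linarith)
        linarith)
      ⟨0, measure_ne_top _ _⟩
    rw [hiInt] at htend
    have hge : ENNReal.ofReal u ≤ P {ω | Xt ω ≤ t0} := by
      refine ge_of_tendsto htend (Eventually.of_forall fun k => ?_)
      simp only [Function.comp_apply]
      rw [FofReal P Xt F hF]
      apply ENNReal.ofReal_le_ofReal
      have hnot : t0 + 1 / (k + 1) ∉ S := by
        intro hmem
        have := le_csSup hbdd hmem
        have hpos : (0:ℝ) < 1 / ((k:ℝ) + 1) := by positivity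
        linarith
      exact le_of_not_ge hnot
    rw [hF]
    calc u = (ENNReal.ofReal u).toReal := (ENNReal.toReal_ofReal (le_of_lt h0)).symm
      _ ≤ (P {ω | Xt ω ≤ t0}).toReal := ENNReal.toReal_mono (measure_ne_top _ _) hge
  have hFt0 : F t0 = u := le_antisymm step1 step2
  have hset : {ω | F (Xt ω) ≤ u} = {ω | Xt ω ≤ t0} := by
    ext ω
    simp only [Set.mem_setOf_eq]
    constructor
    · intro h; exact le_csSup hbdd h
    · intro h; rw [← hFt0]; exact hFm h
  rw [hset, FofReal P Xt F hF, hFt0]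

lemma Funif_le (hXt : Measurable Xt) (hatom : ∀ t, P {ω | Xt ω = t} = 0)
    (hF : ∀ t, F t = (P {ω | Xt ω ≤ t}).toReal) {u : ℝ} (h0 : 0 ≤ u) (h1 : u ≤ 1) :
    P {ω | F (Xt ω) ≤ u} = ENNReal.ofReal u := by
  rcases eq_or_lt_of_le h0 with h0' | h0'
  · -- u = 0
    rw [← h0']
    simp only [ENNReal.ofReal_zero]
    have key : ∀ k : ℕ, P {ω | F (Xt ω) ≤ 0} ≤ ENNReal.ofReal (1 / (k + 2)) := by
      intro k
      have hlt : (0:ℝ) < 1 / (k + 2) := by positivity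
      have hlt1 : (1:ℝ) / (k + 2) < 1 := by
        rw [div_lt_one (by positivity)]; push_cast; linarith
      rw [← Funif P Xt F hXt hatom hF hlt hlt1]
      exact measure_mono (fun ω hω => le_trans hω (le_of_lt hlt))
    have htend : Tendsto (fun k : ℕ => ENNReal.ofReal (1 / ((k:ℝ) + 2))) atTop (𝓝 0) := by
      rw [← ENNReal.ofReal_zero]
      apply ENNReal.tendsto_ofReal
      have := tendsto_one_div_add_atTop_nhds_zero_nat (𝕜 := ℝ)
      have h2 : Tendsto (fun k : ℕ => ((k:ℝ) + 2)) atTop atTop :=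
        tendsto_atTop_add_const_right _ 2 tendsto_natCast_atTop_atTop
      exact Tendsto.div_atTop tendsto_const_nhds h2
    exact le_antisymm (ge_of_tendsto htend (Eventually.of_forall key)) zero_le
  rcases eq_or_lt_of_le h1 with h1' | h1'
  · -- u = 1
    rw [h1']
    have : {ω | F (Xt ω) ≤ 1} = Set.univ :=
      Set.eq_univ_of_forall (fun ω => Fle_one P Xt F hF _)
    rw [this, measure_univ, ENNReal.ofReal_one]
  · exact Funif P Xt F hXt hatom hF h0' h1'

lemma Fmeas (hF : ∀ t, F t = (P {ω | Xt ω ≤ t}).toReal) : Measurable F :=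
  (Fmono P Xt F hF).measurable

lemma FIoc (hXt : Measurable Xt) (hatom : ∀ t, P {ω | Xt ω = t} = 0)
    (hF : ∀ t, F t = (P {ω | Xt ω ≤ t}).toReal) {a b : ℝ}
    (h0 : 0 ≤ a) (hab : a ≤ b) (h1 : b ≤ 1) :
    P {ω | F (Xt ω) ∈ Set.Ioc a b} = ENNReal.ofReal (b - a) := by
  have hsetdiff : {ω | F (Xt ω) ∈ Set.Ioc a b} = {ω | F (Xt ω) ≤ b} \ {ω | F (Xt ω) ≤ a} := by
    ext ω
    simp only [Set.mem_setOf_eq, Set.mem_Ioc, Set.mem_diff, not_le]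
    tauto
  have hma : MeasurableSet {ω | F (Xt ω) ≤ a} := by
    have : {ω | F (Xt ω) ≤ a} = (F ∘ Xt) ⁻¹' Set.Iic a := rfl
    rw [this]
    exact ((Fmeas P Xt F hF).comp hXt) measurableSet_Iic
  have hsub2 : {ω | F (Xt ω) ≤ a} ⊆ {ω | F (Xt ω) ≤ b} := fun ω hω => le_trans hω hab
  rw [hsetdiff, measure_diff hsub2 hma.nullMeasurableSet (measure_ne_top _ _),
    Funif_le P Xt F hXt hatom hF h0 (le_trans hab h1),
    Funif_le P Xt F hXt hatom hF (le_trans h0 hab) h1,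
    ← ENNReal.ofReal_sub _ h0]

lemma Fatom (hXt : Measurable Xt) (hatom : ∀ t, P {ω | Xt ω = t} = 0)
    (hF : ∀ t, F t = (P {ω | Xt ω ≤ t}).toReal) (u : ℝ) :
    P {ω | F (Xt ω) = u} = 0 := by
  rcases le_or_gt u 0 with hu | hu
  · have hsub : {ω | F (Xt ω) = u} ⊆ {ω | F (Xt ω) ≤ 0} := fun ω hω => by
      simp only [Set.mem_setOf_eq] at *; rw [hω]; exact hu
    have := Funif_le P Xt F hXt hatom hF (le_refl 0) zero_le_one
    simp only [ENNReal.ofReal_zero] at this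
    exact le_antisymm (le_trans (measure_mono hsub) (le_of_eq this)) zero_le
  rcases le_or_gt u 1 with hu1 | hu1
  · refine le_antisymm ?_ zero_le
    rw [← ENNReal.coe_zero]
    refine ENNReal.le_of_forall_pos_le_add (fun ε hε _ => ?_)
    set δ := min (ε : ℝ) u with hδ
    have hδpos : 0 < δ := lt_min (by exact_mod_cast hε) hu
    have hsub : {ω | F (Xt ω) = u} ⊆ {ω | F (Xt ω) ∈ Set.Ioc (u - δ) u} := fun ω hω => by
      simp only [Set.mem_setOf_eq] at hω
      simp only [Set.mem_setOf_eq, Set.mem_Ioc, hω]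
      constructor
      · linarith
      · exact le_refl u
    calc P {ω | F (Xt ω) = u} ≤ ENNReal.ofReal (u - (u - δ)) := by
          have hδu : δ ≤ u := min_le_right _ _
          rw [← FIoc P Xt F hXt hatom hF (by linarith) (by linarith) hu1]
          exact measure_mono hsub
      _ = ENNReal.ofReal δ := by rw [sub_sub_cancel]
      _ ≤ ENNReal.ofReal (ε : ℝ) := ENNReal.ofReal_le_ofReal (min_le_left _ _)
      _ = (ε : ℝ≥0∞) := ENNReal.ofReal_coe_nnreal
      _ = 0 + (ε : ℝ≥0∞) := (zero_add _).symm
  · have : {ω | F (Xt ω) = u} = ∅ := by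
      ext ω
      simp only [Set.mem_setOf_eq, Set.mem_empty_iff_false, iff_false]
      intro h
      exact absurd (h ▸ Fle_one P Xt F hF (Xt ω)) (not_le.2 hu1)
    rw [this, measure_empty]
end Unif


section Count
variable {n : ℕ}

lemma ncard_filter (p : Fin n → Prop) [DecidablePred p] :
    Nat.card {i : Fin n // p i} = (Finset.univ.filter p).card := by
  rw [Nat.card_eq_fintype_card, Fintype.card_subtype]

lemma ncard_congr {p q : Fin n → Prop} (h : ∀ i, p i ↔ q i) :
    Nat.card {i : Fin n // p i} = Nat.card {i : Fin n // q i} :=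
  Nat.card_congr (Equiv.subtypeEquivRight h)

lemma ncard_mono {p q : Fin n → Prop} (h : ∀ i, p i → q i) :
    Nat.card {i : Fin n // p i} ≤ Nat.card {i : Fin n // q i} :=
  Nat.card_le_card_of_injective (fun a => ⟨a.1, h a.1 a.2⟩) (by
    intro a a' haa'
    cases a; cases a'
    simpa [Subtype.ext_iff] using haa')

lemma ncard_zero {p : Fin n → Prop} (h : ∀ i, ¬ p i) :
    Nat.card {i : Fin n // p i} = 0 :=
  @Nat.card_of_isEmpty _ ⟨fun a => h a.1 a.2⟩

lemma ncard_all {p : Fin n → Prop} (h : ∀ i, p i) :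
    Nat.card {i : Fin n // p i} = n := by
  rw [Nat.card_congr (Equiv.subtypeUnivEquiv h), Nat.card_eq_fintype_card, Fintype.card_fin]

lemma ncard_fiber_sum {γ : Type*} [DecidableEq γ] (f : Fin n → γ) (S : Finset γ) :
    ∑ g ∈ S, Nat.card {i : Fin n // f i = g} = Nat.card {i : Fin n // f i ∈ S} := by
  classical
  rw [ncard_filter (fun i => f i ∈ S)]
  rw [Finset.card_eq_sum_card_fiberwise (f := f) (s := Finset.univ.filter (fun i => f i ∈ S)) (t := S)
    (fun i hi => (Finset.mem_filter.1 hi).2)]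
  apply Finset.sum_congr rfl
  intro g hg
  rw [ncard_filter (fun i => f i = g)]
  congr 1
  ext i
  simp only [Finset.mem_filter, Finset.mem_univ, true_and]
  constructor
  · intro h; exact ⟨h ▸ hg, h⟩
  · intro h; exact h.2

lemma ncard_add {p q : Fin n → Prop} (hdisj : ∀ i, ¬ (p i ∧ q i)) :
    Nat.card {i : Fin n // p i ∨ q i}
      = Nat.card {i : Fin n // p i} + Nat.card {i : Fin n // q i} := by
  classical
  rw [ncard_filter (fun i => p i ∨ q i), ncard_filter p, ncard_filter q, Finset.filter_or]
  apply Finset.card_union_of_disjoint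
  rw [Finset.disjoint_filter]
  intro i _ hp hq
  exact hdisj i ⟨hp, hq⟩
end Count

section Ginv
variable {n n1 : ℕ} (x : Fin n → ℝ) (v : Fin n1 → ℝ)

lemma G_eq (hn : 0 < n)
    (G : ℝ → ℝ)
    (hG : ∀ u, G u = sInf {s : ℝ | u ≤ (Nat.card {i : Fin n // x i ≤ s} : ℝ) / n})
    (j : Fin n1) (u : ℝ)
    (h1 : (Nat.card {i : Fin n // x i < v j} : ℝ) / n < u)
    (h2 : u ≤ (Nat.card {i : Fin n // x i ≤ v j} : ℝ) / n) :
    G u = v j := by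
  rw [hG]
  have hmem : v j ∈ {s : ℝ | u ≤ (Nat.card {i : Fin n // x i ≤ s} : ℝ) / n} := h2
  have hlb : ∀ s ∈ {s : ℝ | u ≤ (Nat.card {i : Fin n // x i ≤ s} : ℝ) / n}, v j ≤ s := by
    intro s hs
    by_contra hc
    push_neg at hc
    have hsub : Nat.card {i : Fin n // x i ≤ s} ≤ Nat.card {i : Fin n // x i < v j} :=
      ncard_mono (fun i hi => lt_of_le_of_lt hi hc)
    have hdiv : (Nat.card {i : Fin n // x i ≤ s} : ℝ) / n
        ≤ (Nat.card {i : Fin n // x i < v j} : ℝ) / n := by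
      gcongr
    have hs' : u ≤ (Nat.card {i : Fin n // x i ≤ s} : ℝ) / n := hs
    linarith
  exact le_antisymm (csInf_le ⟨v j, hlb⟩ hmem) (le_csInf ⟨v j, hmem⟩ hlb)
end Ginv


/-- One-dimensional corollary: merge each maximal block of contiguous
cells all of whose data points belong entirely to one common cluster.  If the dither `X̃`
is generated by drawing a cluster `L` with `P(L = ℓ) = n_ℓ/n` and, given `L = ℓ`, drawing
`X̃` from any atomless conditional distribution satisfying
`P(X̃ ∈ C(i'_1) | L = ℓ) = n_ℓ(i'_1)/n_ℓ` on merged cells, then `X̂ = G(F_{X̃}(X̃))`,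
with `F_{X̃}` the CDF of `X̃` and `G` the generalized inverse of the empirical CDF,
satisfies `P(X̂ = v_1(i_1) ∧ L = ℓ) = (n_ℓ(i_1)/n_ℓ)·(n_ℓ/n)`, i.e. conditioned on `L = ℓ`
it resamples the cluster's values with their within-cluster empirical frequencies. -/
theorem one_dim_merged_cells_resampling
    (n n1 c : ℕ) (hn : 0 < n)
    (x : Fin n → ℝ) (cl : Fin n → Fin c)
    (v : Fin n1 → ℝ) (hv : StrictMono v)
    (hx : ∀ i, ∃ i1, x i = v i1)
    (hobs : ∀ i1, ∃ i, x i = v i1)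
    (hcl : ∀ ℓ : Fin c, ∃ i, cl i = ℓ)
    (I : Fin n1 → Set ℝ)
    (hImeas : ∀ i1, MeasurableSet (I i1))
    (hIint : ∀ i1, ∃ a b : ℝ, a < b ∧ Set.Ioo a b ⊆ I i1 ∧ I i1 ⊆ Set.Icc a b)
    (hIord : ∀ i1 i1' : Fin n1, i1 < i1' → ∀ s ∈ I i1, ∀ t ∈ I i1', s < t)
    (hvI : ∀ i1, v i1 ∈ I i1)
    -- merged cells: a monotone surjective block assignment on contiguous cells
    (b : ℕ) (B : Fin n1 → Fin b)
    (hBmono : Monotone B) (hBsurj : Function.Surjective B)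
    -- each block containing at least two cells is wholly owned by a single cluster
    (hBown : ∀ i1 i1' : Fin n1, i1 ≠ i1' → B i1 = B i1' →
      ∃ ℓ : Fin c, ∀ i1'' : Fin n1, B i1'' = B i1 →
        ∀ i : Fin n, x i = v i1'' → cl i = ℓ)
    -- maximality: two adjacent cells in different blocks cannot both belong in full to a
    -- common cluster
    (hBmax : ∀ (i1 : Fin n1) (h : (i1 : ℕ) + 1 < n1), B i1 ≠ B ⟨(i1 : ℕ) + 1, h⟩ →
      ¬ ∃ ℓ : Fin c, (∀ i : Fin n, x i = v i1 → cl i = ℓ)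
          ∧ (∀ i : Fin n, x i = v ⟨(i1 : ℕ) + 1, h⟩ → cl i = ℓ))
    {Ω : Type*} [MeasurableSpace Ω] (P : Measure Ω) [IsProbabilityMeasure P]
    (L : Ω → Fin c) (hLmeas : Measurable L)
    (Xt : Ω → ℝ) (hXtmeas : Measurable Xt)
    -- cluster marginal:  P(L = ℓ) = n_ℓ / n
    (hL : ∀ ℓ, P {ω | L ω = ℓ} = (Nat.card {i : Fin n // cl i = ℓ} : ℝ≥0∞) / n)
    -- merged-cell probabilities:  P(X̃ ∈ C(i'_1), L = ℓ) = (n_ℓ(i'_1)/n_ℓ)·(n_ℓ/n)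
    (hcellm : ∀ (ℓ : Fin c) (β : Fin b),
      P ({ω | ∃ i1, B i1 = β ∧ Xt ω ∈ I i1} ∩ {ω | L ω = ℓ})
        = ((Nat.card {i : Fin n // cl i = ℓ ∧ ∃ i1, B i1 = β ∧ x i = v i1} : ℝ≥0∞)
              / (Nat.card {i : Fin n // cl i = ℓ} : ℝ≥0∞))
          * ((Nat.card {i : Fin n // cl i = ℓ} : ℝ≥0∞) / n))
    -- the conditional distribution of X̃ given L = ℓ is continuous (atomless)
    (hatomless : ∀ (ℓ : Fin c) (t : ℝ), P ({ω | Xt ω = t} ∩ {ω | L ω = ℓ}) = 0)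
    -- F is the CDF of X̃ and G the generalized inverse of the empirical CDF
    (F : ℝ → ℝ) (hF : ∀ t, F t = (P {ω | Xt ω ≤ t}).toReal)
    (G : ℝ → ℝ)
    (hG : ∀ u, G u = sInf {s : ℝ | u ≤ (Nat.card {i : Fin n // x i ≤ s} : ℝ) / n}) :
    ∀ (ℓ : Fin c) (i1 : Fin n1),
      P ({ω | G (F (Xt ω)) = v i1} ∩ {ω | L ω = ℓ})
        = ((Nat.card {i : Fin n // cl i = ℓ ∧ x i = v i1} : ℝ≥0∞)
              / (Nat.card {i : Fin n // cl i = ℓ} : ℝ≥0∞))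
          * ((Nat.card {i : Fin n // cl i = ℓ} : ℝ≥0∞) / n) := by
  classical
  intro ℓ j
  -- value index of each data point
  have hidx0 : ∀ i, ∃ j', x i = v j' := hx
  set idx : Fin n → Fin n1 := fun i => (hidx0 i).choose with hidxdef
  have hidx : ∀ i, x i = v (idx i) := fun i => (hidx0 i).choose_spec
  have hidxu : ∀ i (j' : Fin n1), x i = v j' → idx i = j' := by
    intro i j' h
    exact hv.injective (by rw [← hidx i, h])
  -- count abbreviations
  set prev : Fin n1 → ℕ := fun j' => Nat.card {i : Fin n // x i < v j'} with hprevdef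
  set cum : Fin n1 → ℕ := fun j' => Nat.card {i : Fin n // x i ≤ v j'} with hcumdef
  set pc : Fin c → Fin b → ℕ :=
    fun ℓ' β => Nat.card {i : Fin n // cl i = ℓ' ∧ ∃ j', B j' = β ∧ x i = v j'} with hpcdef
  set pv : Fin c → Fin n1 → ℕ :=
    fun ℓ' j' => Nat.card {i : Fin n // cl i = ℓ' ∧ x i = v j'} with hpvdef
  set Nc : Fin c → ℕ := fun ℓ' => Nat.card {i : Fin n // cl i = ℓ'} with hNcdef
  set Q : Fin b → ℕ := fun β => Nat.card {i : Fin n // ∃ j', B j' < β ∧ x i = v j'} with hQdef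
  set Q' : Fin b → ℕ := fun β => Nat.card {i : Fin n // ∃ j', B j' ≤ β ∧ x i = v j'} with hQ'def
  set f : Fin n → Fin c × Fin b := fun i => (cl i, B (idx i)) with hfdef
  have hnR : (0:ℝ) < n := by exact_mod_cast hn
  -- basic predicate translations
  have hlt_iff : ∀ i (j' : Fin n1), x i < v j' ↔ idx i < j' := by
    intro i j'
    rw [hidx i, hv.lt_iff_lt]
  have hle_iff : ∀ i (j' : Fin n1), x i ≤ v j' ↔ idx i ≤ j' := by
    intro i j'
    rw [hidx i, hv.le_iff_le]
  have hBlt : ∀ (j1 j2 : Fin n1), B j1 < B j2 → j1 < j2 := by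
    intro j1 j2 h
    by_contra hc
    push_neg at hc
    exact absurd (hBmono hc) (not_le.2 h)
  -- count facts
  have hQprev : ∀ j' : Fin n1, Q (B j') ≤ prev j' := by
    intro j'
    apply ncard_mono
    rintro i ⟨j'', hj'', hxi⟩
    have := hBlt _ _ hj''
    rw [hxi]
    exact hv this
  have hcumQ' : ∀ j' : Fin n1, cum j' ≤ Q' (B j') := by
    intro j'
    apply ncard_mono
    intro i hi
    exact ⟨idx i, hBmono ((hle_iff i j').1 hi), hidx i⟩
  have hQ'Q : ∀ β β' : Fin b, β < β' → Q' β ≤ Q β' := by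
    intro β β' hββ'
    apply ncard_mono
    rintro i ⟨j'', hj'', hxi⟩
    exact ⟨j'', lt_of_le_of_lt hj'' hββ', hxi⟩
  have hprevcum : ∀ j' : Fin n1, cum j' = prev j' + Nat.card {i : Fin n // x i = v j'} := by
    intro j'
    rw [show cum j' = Nat.card {i : Fin n // x i < v j' ∨ x i = v j'} from
      ncard_congr (fun i => le_iff_lt_or_eq)]
    exact ncard_add (fun i ⟨h1, h2⟩ => absurd h2 (ne_of_lt h1))
  have hprev0 : ∀ j' : Fin n1, (j' : ℕ) = 0 → prev j' = 0 := by
    intro j' hj'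
    apply ncard_zero
    intro i hi
    have h2 : (idx i : ℕ) < (j' : ℕ) := (hlt_iff i j').1 hi
    omega
  have hcumlast : ∀ j' : Fin n1, (j' : ℕ) + 1 = n1 → cum j' = n := by
    intro j' hj'
    apply ncard_all
    intro i
    rw [hle_iff]
    have h1 : (idx i : ℕ) < n1 := (idx i).2
    have : (idx i : ℕ) ≤ (j' : ℕ) := by omega
    exact this
  have hprevsucc : ∀ (j' : Fin n1) (h : (j' : ℕ) + 1 < n1), prev ⟨(j' : ℕ) + 1, h⟩ = cum j' := by
    intro j' h
    apply ncard_congr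
    intro i
    rw [hlt_iff, hle_iff]
    constructor
    · intro hlt
      have h2 : (idx i : ℕ) < (j' : ℕ) + 1 := hlt
      exact (by omega : (idx i : ℕ) ≤ (j' : ℕ))
    · intro hle
      have h2 : (idx i : ℕ) ≤ (j' : ℕ) := hle
      exact (by omega : (idx i : ℕ) < (j' : ℕ) + 1)
  have hcum_le : ∀ j' : Fin n1, cum j' ≤ n := by
    intro j'
    calc cum j' ≤ Nat.card {i : Fin n // True} := ncard_mono (fun i _ => trivial)
      _ = n := ncard_all (fun i => trivial)
  have hprevcumle : ∀ j' : Fin n1, prev j' ≤ cum j' :=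
    fun j' => ncard_mono (fun i hi => le_of_lt hi)
  -- partition of (0,1] by the intervals (prev j'/n, cum j'/n]
  have hpart : ∀ u : ℝ, 0 < u → u ≤ 1 →
      ∃ j'' : Fin n1, (prev j'' : ℝ) / n < u ∧ u ≤ (cum j'' : ℝ) / n := by
    intro u hu0 hu1
    have hn1pos : 0 < n1 := j.pos
    set T : Finset (Fin n1) := Finset.univ.filter (fun j'' => (prev j'' : ℝ) / n < u) with hT
    have hTne : T.Nonempty := by
      refine ⟨⟨0, hn1pos⟩, ?_⟩
      rw [hT, Finset.mem_filter]
      refine ⟨Finset.mem_univ _, ?_⟩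
      rw [hprev0 ⟨0, hn1pos⟩ rfl]
      simpa using hu0
    set jm := T.max' hTne with hjm
    have hjmmem : jm ∈ T := T.max'_mem hTne
    have hjm1 : (prev jm : ℝ) / n < u := (Finset.mem_filter.1 hjmmem).2
    refine ⟨jm, hjm1, ?_⟩
    by_cases hlast : (jm : ℕ) + 1 < n1
    · set j' : Fin n1 := ⟨(jm : ℕ) + 1, hlast⟩ with hj'
      have hnot : j' ∉ T := by
        intro hmem
        have := T.le_max' j' hmem
        rw [← hjm] at this
        have h2 : (j' : ℕ) ≤ (jm : ℕ) := this
        simp [hj'] at h2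
      rw [hT, Finset.mem_filter] at hnot
      push_neg at hnot
      have := hnot (Finset.mem_univ _)
      rw [hprevsucc jm hlast] at this
      exact this
    · have hl : (jm : ℕ) + 1 = n1 := by
        have := jm.2
        omega
      rw [hcumlast jm hl]
      rw [div_self (ne_of_gt hnR)] at *
      exact hu1
  -- measure-side setup
  have hIdisj : ∀ (j1 j2 : Fin n1), j1 ≠ j2 → ∀ t : ℝ, t ∈ I j1 → t ∈ I j2 → False := by
    intro j1 j2 hne t h1 h2
    rcases lt_or_gt_of_ne hne with h | h
    · exact absurd (hIord j1 j2 h t h1 t h2) (lt_irrefl t)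
    · exact absurd (hIord j2 j1 h t h2 t h1) (lt_irrefl t)
  set Aset : Fin b → Set Ω := fun β => {ω | ∃ j', B j' = β ∧ Xt ω ∈ I j'} with hAsetdef
  set Lset : Fin c → Set Ω := fun ℓ' => {ω | L ω = ℓ'} with hLsetdef
  have hAmeas : ∀ β, MeasurableSet (Aset β) := by
    intro β
    have : Aset β = ⋃ j', ⋃ (_ : B j' = β), Xt ⁻¹' I j' := by
      ext ω
      simp only [hAsetdef, Set.mem_setOf_eq, Set.mem_iUnion, Set.mem_preimage]
      tauto
    rw [this]
    exact MeasurableSet.iUnion (fun j' => MeasurableSet.iUnion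
      (fun _ => hXtmeas (hImeas j')))
  have hLsetmeas : ∀ ℓ', MeasurableSet (Lset ℓ') :=
    fun ℓ' => hLmeas (measurableSet_singleton ℓ')
  have hNcpos : ∀ ℓ', (Nc ℓ' : ℝ≥0∞) ≠ 0 ∧ (Nc ℓ' : ℝ≥0∞) ≠ ∞ := by
    intro ℓ'
    constructor
    · obtain ⟨i0, hi0⟩ := hcl ℓ'
      have : 0 < Nc ℓ' := by
        rw [hNcdef]
        exact Nat.card_pos_iff.2 ⟨⟨⟨i0, hi0⟩⟩, Set.finite_univ.subset (Set.subset_univ _)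
          |>.to_subtype⟩
      exact_mod_cast Nat.pos_iff_ne_zero.1 this
    · exact ENNReal.natCast_ne_top _
  have hcanc : ∀ (a : ℕ) (ℓ' : Fin c),
      ((a : ℝ≥0∞) / (Nc ℓ' : ℝ≥0∞)) * ((Nc ℓ' : ℝ≥0∞) / n) = (a : ℝ≥0∞) / n := by
    intro a ℓ'
    calc ((a : ℝ≥0∞) / (Nc ℓ' : ℝ≥0∞)) * ((Nc ℓ' : ℝ≥0∞) / n)
        = ((a : ℝ≥0∞) / (Nc ℓ' : ℝ≥0∞)) * ((Nc ℓ' : ℝ≥0∞) * ((n : ℝ≥0∞))⁻¹) := by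
          simp only [div_eq_mul_inv]
      _ = (((a : ℝ≥0∞) / (Nc ℓ' : ℝ≥0∞)) * (Nc ℓ' : ℝ≥0∞)) * ((n : ℝ≥0∞))⁻¹ := by
          rw [mul_assoc]
      _ = (a : ℝ≥0∞) * ((n : ℝ≥0∞))⁻¹ := by
          rw [ENNReal.div_mul_cancel (hNcpos ℓ').1 (hNcpos ℓ').2]
      _ = (a : ℝ≥0∞) / n := (div_eq_mul_inv _ _).symm
  have hcell' : ∀ (ℓ' : Fin c) (β : Fin b), P (Aset β ∩ Lset ℓ') = (pc ℓ' β : ℝ≥0∞) / n := by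
    intro ℓ' β
    rw [hAsetdef, hLsetdef]
    rw [show ({ω | ∃ j', B j' = β ∧ Xt ω ∈ I j'} : Set Ω) ∩ {ω | L ω = ℓ'}
      = {ω | ∃ i1, B i1 = β ∧ Xt ω ∈ I i1} ∩ {ω | L ω = ℓ'} from rfl]
    rw [hcellm ℓ' β]
    exact hcanc _ _
  have hpcf : ∀ (ℓ' : Fin c) (β : Fin b), pc ℓ' β = Nat.card {i : Fin n // f i = (ℓ', β)} := by
    intro ℓ' β
    apply ncard_congr
    intro i
    simp only [hfdef, Prod.ext_iff]
    constructor
    · rintro ⟨h1, j', hj', hxi⟩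
      refine ⟨h1, ?_⟩
      rw [hidxu i j' hxi]
      exact hj'
    · rintro ⟨h1, h2⟩
      exact ⟨h1, idx i, h2, hidx i⟩
  have hmeasS : ∀ S : Finset (Fin c × Fin b),
      P (⋃ p ∈ S, Aset p.2 ∩ Lset p.1) = (Nat.card {i : Fin n // f i ∈ S} : ℝ≥0∞) / n := by
    intro S
    rw [measure_biUnion_finset ?hd (fun p _ => (hAmeas p.2).inter (hLsetmeas p.1))]
    case hd =>
      intro p hp q hq hpq
      apply Set.disjoint_left.2
      rintro ω ⟨hA1, hL1⟩ ⟨hA2, hL2⟩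
      apply hpq
      have hceq : p.1 = q.1 := by
        rw [hLsetdef] at hL1 hL2
        have e1 : L ω = p.1 := hL1
        have e2 : L ω = q.1 := hL2
        rw [← e1, e2]
      have hbeq : p.2 = q.2 := by
        rw [hAsetdef] at hA1 hA2
        obtain ⟨j1, hj1, hm1⟩ := hA1
        obtain ⟨j2, hj2, hm2⟩ := hA2
        by_cases hjj : j1 = j2
        · rw [← hj1, ← hj2, hjj]
        · exact absurd (hIdisj j1 j2 hjj (Xt ω) hm1 hm2) (fun h => h)
      exact Prod.ext hceq hbeq
    have : ∀ p ∈ S, P (Aset p.2 ∩ Lset p.1) = (pc p.1 p.2 : ℝ≥0∞) / n :=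
      fun p _ => hcell' p.1 p.2
    rw [Finset.sum_congr rfl this]
    rw [show (∑ p ∈ S, (pc p.1 p.2 : ℝ≥0∞) / n) = (∑ p ∈ S, (pc p.1 p.2 : ℝ≥0∞)) / n from by
      simp only [div_eq_mul_inv]
      rw [Finset.sum_mul]]
    congr 1
    rw [← Nat.cast_sum]
    congr 1
    rw [← ncard_fiber_sum f S]
    apply Finset.sum_congr rfl
    intro p _
    rw [hpcf p.1 p.2]
  -- the union of all cells has full probability
  set U : Set Ω := ⋃ j', Xt ⁻¹' I j' with hUdef
  have hUmeas : MeasurableSet U :=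
    MeasurableSet.iUnion (fun j' => hXtmeas (hImeas j'))
  have hPU : P U = 1 := by
    have hUeq : (⋃ p ∈ (Finset.univ : Finset (Fin c × Fin b)), Aset p.2 ∩ Lset p.1) = U := by
      ext ω
      simp only [Set.mem_iUnion, hUdef, Set.mem_preimage]
      constructor
      · rintro ⟨p, _, hA, _⟩
        obtain ⟨j', _, hm⟩ := hA
        exact ⟨j', hm⟩
      · rintro ⟨j', hm⟩
        exact ⟨(L ω, B j'), Finset.mem_univ _, ⟨j', rfl, hm⟩, rfl⟩
    rw [← hUeq, hmeasS Finset.univ]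
    rw [ncard_all (fun i => Finset.mem_univ _)]
    exact ENNReal.div_self (by exact_mod_cast hn.ne') (ENNReal.natCast_ne_top n)
  have hUc : P Uᶜ = 0 := by
    rw [measure_compl hUmeas (measure_ne_top _ _), hPU, measure_univ, tsub_self]
  have htoRealdiv : ∀ m : ℕ, (((m : ℝ≥0∞)) / (n : ℝ≥0∞)).toReal = (m : ℝ) / n := by
    intro m
    rw [ENNReal.toReal_div]
    norm_num
  have hdivnetop : ∀ m : ℕ, ((m : ℝ≥0∞)) / (n : ℝ≥0∞) ≠ ∞ := by
    intro m
    rw [Ne, ENNReal.div_eq_top]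
    push_neg
    constructor
    · intro _
      exact_mod_cast hn.ne'
    · intro h
      exact absurd h (ENNReal.natCast_ne_top m)
  -- bounds for F on each cell, in terms of block counts
  have hFlow : ∀ (j'' : Fin n1) (t : ℝ), t ∈ I j'' → (Q (B j'') : ℝ) / n ≤ F t := by
    intro j'' t ht
    set Sl : Finset (Fin c × Fin b) := Finset.univ.filter (fun p => p.2 < B j'') with hSl
    have hsub : (⋃ p ∈ Sl, Aset p.2 ∩ Lset p.1) ⊆ {ω | Xt ω ≤ t} := by
      rintro ω hω
      simp only [Set.mem_iUnion] at hω
      obtain ⟨p, hp, hA, -⟩ := hω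
      rw [hSl, Finset.mem_filter] at hp
      obtain ⟨j3, hj3, hm3⟩ := hA
      have hlt : j3 < j'' := hBlt j3 j'' (by rw [hj3]; exact hp.2)
      exact le_of_lt (hIord j3 j'' hlt (Xt ω) hm3 t ht)
    have hcard : Nat.card {i : Fin n // f i ∈ Sl} = Q (B j'') := by
      apply ncard_congr
      intro i
      simp only [hSl, Finset.mem_filter, Finset.mem_univ, true_and, hfdef]
      constructor
      · intro h
        exact ⟨idx i, h, hidx i⟩
      · rintro ⟨j', hj', hxi⟩
        rw [hidxu i j' hxi]
        exact hj'
    have hP : ((Q (B j'') : ℝ≥0∞)) / n ≤ P {ω | Xt ω ≤ t} := by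
      rw [← hcard, ← hmeasS Sl]
      exact measure_mono hsub
    rw [hF]
    calc (Q (B j'') : ℝ) / n = (((Q (B j'') : ℝ≥0∞)) / n).toReal := (htoRealdiv _).symm
      _ ≤ (P {ω | Xt ω ≤ t}).toReal := ENNReal.toReal_mono (measure_ne_top _ _) hP
  have hFhigh : ∀ (j'' : Fin n1) (t : ℝ), t ∈ I j'' → F t ≤ (Q' (B j'') : ℝ) / n := by
    intro j'' t ht
    set Su : Finset (Fin c × Fin b) := Finset.univ.filter (fun p => p.2 ≤ B j'') with hSu
    have hsub : {ω | Xt ω ≤ t} ⊆ (⋃ p ∈ Su, Aset p.2 ∩ Lset p.1) ∪ Uᶜ := by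
      intro ω hω
      by_cases hU : ω ∈ U
      · left
        rw [hUdef] at hU
        simp only [Set.mem_iUnion, Set.mem_preimage] at hU
        obtain ⟨j3, hm3⟩ := hU
        have hle : B j3 ≤ B j'' := by
          by_contra hc
          push_neg at hc
          have : j'' < j3 := hBlt j'' j3 hc
          exact absurd (hIord j'' j3 this t ht (Xt ω) hm3) (not_lt.2 hω)
        simp only [Set.mem_iUnion]
        exact ⟨(L ω, B j3), by rw [hSu, Finset.mem_filter]; exact ⟨Finset.mem_univ _, hle⟩,
          ⟨j3, rfl, hm3⟩, rfl⟩
      · exact Or.inr hU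
    have hcard : Nat.card {i : Fin n // f i ∈ Su} = Q' (B j'') := by
      apply ncard_congr
      intro i
      simp only [hSu, Finset.mem_filter, Finset.mem_univ, true_and, hfdef]
      constructor
      · intro h
        exact ⟨idx i, h, hidx i⟩
      · rintro ⟨j', hj', hxi⟩
        rw [hidxu i j' hxi]
        exact hj'
    have hP : P {ω | Xt ω ≤ t} ≤ ((Q' (B j'') : ℝ≥0∞)) / n := by
      calc P {ω | Xt ω ≤ t} ≤ P ((⋃ p ∈ Su, Aset p.2 ∩ Lset p.1) ∪ Uᶜ) := measure_mono hsub
        _ ≤ P (⋃ p ∈ Su, Aset p.2 ∩ Lset p.1) + P Uᶜ := measure_union_le _ _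
        _ = ((Q' (B j'') : ℝ≥0∞)) / n + 0 := by rw [hmeasS Su, hcard, hUc]
        _ = ((Q' (B j'') : ℝ≥0∞)) / n := add_zero _
    rw [hF]
    calc (P {ω | Xt ω ≤ t}).toReal ≤ (((Q' (B j'') : ℝ≥0∞)) / n).toReal :=
          ENNReal.toReal_mono (hdivnetop _) hP
      _ = (Q' (B j'') : ℝ) / n := htoRealdiv _
  -- X̃ is atomless
  have hatomXt : ∀ t : ℝ, P {ω | Xt ω = t} = 0 := by
    intro t
    have hsub : {ω | Xt ω = t} ⊆ ⋃ ℓ', ({ω | Xt ω = t} ∩ Lset ℓ') := by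
      intro ω hω
      exact Set.mem_iUnion.2 ⟨L ω, hω, rfl⟩
    refine le_antisymm (le_trans (measure_mono hsub) ?_) zero_le
    rw [show (0 : ℝ≥0∞) = ∑' ℓ' : Fin c, 0 from by simp]
    refine le_trans (measure_iUnion_le _) ?_
    exact ENNReal.tsum_le_tsum (fun ℓ' => le_of_eq (hatomless ℓ' t))
  -- the exceptional null set
  set Nul : Set Ω := Uᶜ ∪ {ω | F (Xt ω) ≤ 0} ∪
    ⋃ j' : Fin n1, ({ω | F (Xt ω) = (prev j' : ℝ) / n} ∪
      {ω | F (Xt ω) = (Q (B j') : ℝ) / n}) with hNuldef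
  have hNul : P Nul = 0 := by
    rw [hNuldef]
    apply measure_union_null
    apply measure_union_null
    · exact hUc
    · have := Funif_le P Xt F hXtmeas hatomXt hF (le_refl 0) zero_le_one
      simpa using this
    · apply measure_iUnion_null
      intro j'
      exact measure_union_null (Fatom P Xt F hXtmeas hatomXt hF _)
        (Fatom P Xt F hXtmeas hatomXt hF _)
  have hNulmem : ∀ ω, ω ∉ Nul →
      (ω ∈ U ∧ 0 < F (Xt ω) ∧
        (∀ j' : Fin n1, F (Xt ω) ≠ (prev j' : ℝ) / n ∧ F (Xt ω) ≠ (Q (B j') : ℝ) / n)) := by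
    intro ω hω
    rw [hNuldef] at hω
    simp only [Set.mem_union, Set.mem_iUnion, Set.mem_setOf_eq, not_or, not_exists,
      Set.mem_compl_iff, not_le] at hω
    obtain ⟨⟨h1, h2⟩, h3⟩ := hω
    refine ⟨not_not.1 h1, h2, fun j' => ?_⟩
    have := h3 j'
    exact this
  -- pointwise characterization of the quantizer output
  have hGiff : ∀ ω, ω ∉ Nul → ∀ jj : Fin n1,
      (G (F (Xt ω)) = v jj ↔
        ((prev jj : ℝ) / n < F (Xt ω) ∧ F (Xt ω) ≤ (cum jj : ℝ) / n)) := by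
    intro ω hω jj
    obtain ⟨-, hFpos, -⟩ := hNulmem ω hω
    have hFle1 : F (Xt ω) ≤ 1 := Fle_one P Xt F hF _
    constructor
    · intro hGv
      obtain ⟨j3, h3a, h3b⟩ := hpart (F (Xt ω)) hFpos hFle1
      have hGv3 : G (F (Xt ω)) = v j3 := G_eq x v hn G hG j3 _ h3a h3b
      have : jj = j3 := hv.injective (hGv.symm.trans hGv3)
      rw [this]
      exact ⟨h3a, h3b⟩
    · rintro ⟨h1, h2⟩
      exact G_eq x v hn G hG jj _ h1 h2
  have hdivmono : ∀ m m' : ℕ, m ≤ m' → (m : ℝ) / n ≤ (m' : ℝ) / n := by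
    intro m m' h
    gcongr

  have hptA : ∀ ω, ω ∉ Nul → ∀ jj : Fin n1,
      (prev jj : ℝ) / n < F (Xt ω) → F (Xt ω) ≤ (cum jj : ℝ) / n → ω ∈ Aset (B jj) := by
    intro ω hω jj h1 h2
    obtain ⟨hU, -, hne⟩ := hNulmem ω hω
    rw [hUdef] at hU
    simp only [Set.mem_iUnion, Set.mem_preimage] at hU
    obtain ⟨j3, hm3⟩ := hU
    have hlow := hFlow j3 (Xt ω) hm3
    have hhigh := hFhigh j3 (Xt ω) hm3
    rcases lt_trichotomy (B j3) (B jj) with hc | hc | hc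
    · exfalso
      have : (Q' (B j3) : ℝ) / n ≤ (prev jj : ℝ) / n :=
        hdivmono _ _ (le_trans (hQ'Q _ _ hc) (hQprev jj))
      linarith
    · exact ⟨j3, hc, hm3⟩
    · exfalso
      have hq : (cum jj : ℝ) / n ≤ (Q (B j3) : ℝ) / n :=
        hdivmono _ _ (le_trans (hcumQ' jj) (hQ'Q _ _ hc))
      exact (hne j3).2 (le_antisymm (by linarith) (by linarith))
  -- the interval event
  set E : Set Ω := {ω | (prev j : ℝ) / n < F (Xt ω) ∧ F (Xt ω) ≤ (cum j : ℝ) / n} with hEdef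
  have hFXtmeas : Measurable (fun ω => F (Xt ω)) := (Fmeas P Xt F hF).comp hXtmeas
  have hEmeas : MeasurableSet E := by
    have : E = (fun ω => F (Xt ω)) ⁻¹' Set.Ioc ((prev j : ℝ) / n) ((cum j : ℝ) / n) := by
      ext ω
      simp [hEdef, Set.mem_Ioc]
    rw [this]
    exact hFXtmeas measurableSet_Ioc
  have hae : ∀ᵐ ω ∂P, ω ∉ Nul := by
    rw [MeasureTheory.ae_iff]
    simpa using hNul
  have hLHSeq : P ({ω | G (F (Xt ω)) = v j} ∩ Lset ℓ) = P (E ∩ Lset ℓ) := by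
    apply measure_congr
    apply Filter.eventuallyEq_set.2
    refine hae.mono (fun ω hω => ?_)
    constructor
    · rintro ⟨h1, h2⟩
      exact ⟨(hGiff ω hω j).1 h1, h2⟩
    · rintro ⟨h1, h2⟩
      exact ⟨(hGiff ω hω j).2 h1, h2⟩
  -- key computation
  have key : P (E ∩ Lset ℓ) = (pv ℓ j : ℝ≥0∞) / n := by
    by_cases hsing : ∀ j'', B j'' = B j → j'' = j
    · -- singleton block
      have hQeq : Q (B j) = prev j := by
        apply ncard_congr
        intro i
        constructor
        · rintro ⟨j', hlt, hxi⟩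
          rw [hxi]
          exact hv (hBlt _ _ hlt)
        · intro hxi
          have hlt : idx i < j := (hlt_iff i j).1 hxi
          rcases lt_or_eq_of_le (hBmono (le_of_lt hlt)) with h | h
          · exact ⟨idx i, h, hidx i⟩
          · exact absurd (hsing _ h) (ne_of_lt hlt)
      have hQ'eq : Q' (B j) = cum j := by
        apply ncard_congr
        intro i
        constructor
        · rintro ⟨j', hle, hxi⟩
          have hj'j : j' ≤ j := by
            by_contra hc
            push_neg at hc
            have := hBmono (le_of_lt hc)
            have heq : B j' = B j := le_antisymm hle this
            exact absurd (hsing _ heq) (ne_of_gt hc)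
          rw [hxi]
          exact hv.le_iff_le.2 hj'j
        · intro hxi
          exact ⟨idx i, hBmono ((hle_iff i j).1 hxi), hidx i⟩
      have hpceq : pc ℓ (B j) = pv ℓ j := by
        apply ncard_congr
        intro i
        constructor
        · rintro ⟨h1, j', hj', hxi⟩
          rw [hsing j' hj'] at hxi
          exact ⟨h1, hxi⟩
        · rintro ⟨h1, hxi⟩
          exact ⟨h1, j, rfl, hxi⟩
      have haeq : P (E ∩ Lset ℓ) = P (Aset (B j) ∩ Lset ℓ) := by
        apply measure_congr
        apply Filter.eventuallyEq_set.2
        refine hae.mono (fun ω hω => ?_)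
        constructor
        · rintro ⟨h1, h2⟩
          exact ⟨hptA ω hω j h1.1 h1.2, h2⟩
        · rintro ⟨h1, h2⟩
          obtain ⟨j3, hj3, hm3⟩ := h1
          have hj3j : j3 = j := hsing j3 hj3
          subst hj3j
          have hlow := hFlow j3 (Xt ω) hm3
          have hhigh := hFhigh j3 (Xt ω) hm3
          rw [hQeq] at hlow
          rw [hQ'eq] at hhigh
          obtain ⟨-, -, hne⟩ := hNulmem ω hω
          refine ⟨⟨lt_of_le_of_ne hlow (Ne.symm (hne j3).1), hhigh⟩, h2⟩
      rw [haeq, hcell' ℓ (B j), hpceq]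
    · -- merged block with an owner
      push_neg at hsing
      obtain ⟨j', hBj', hne'⟩ := hsing
      obtain ⟨ℓ0, hown⟩ := hBown j' j hne' hBj'
      have hown' : ∀ j'' : Fin n1, B j'' = B j → ∀ i : Fin n, x i = v j'' → cl i = ℓ0 := by
        intro j'' h i hxi
        exact hown j'' (by rw [hBj']; exact h) i hxi
      have hpczero : ∀ ℓ'' : Fin c, ℓ'' ≠ ℓ0 → pc ℓ'' (B j) = 0 := by
        intro ℓ'' hℓ''
        apply ncard_zero
        rintro i ⟨h1, j3, hj3, hxi⟩
        exact hℓ'' (h1 ▸ hown' j3 hj3 i hxi ▸ rfl)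
      have hsubzero : ∀ ℓ'' : Fin c, ℓ'' ≠ ℓ0 → P (E ∩ Lset ℓ'') = 0 := by
        intro ℓ'' hℓ''
        refine le_antisymm ?_ zero_le
        have hsub : E ∩ Lset ℓ'' ⊆ (Aset (B j) ∩ Lset ℓ'') ∪ Nul := by
          rintro ω ⟨h1, h2⟩
          by_cases hω : ω ∈ Nul
          · exact Or.inr hω
          · exact Or.inl ⟨hptA ω hω j h1.1 h1.2, h2⟩
        calc P (E ∩ Lset ℓ'') ≤ P ((Aset (B j) ∩ Lset ℓ'') ∪ Nul) := measure_mono hsub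
          _ ≤ P (Aset (B j) ∩ Lset ℓ'') + P Nul := measure_union_le _ _
          _ = (pc ℓ'' (B j) : ℝ≥0∞) / n + 0 := by rw [hcell', hNul]
          _ = 0 := by rw [hpczero ℓ'' hℓ'', add_zero]; simp
      by_cases hll : ℓ = ℓ0
      · subst hll
        -- P(E) equals the cell mass, and all of it sits in cluster ℓ
        have hPE : P E = ((Nat.card {i : Fin n // x i = v j} : ℝ≥0∞)) / n := by
          have hIoc : E = {ω | F (Xt ω) ∈ Set.Ioc ((prev j : ℝ) / n) ((cum j : ℝ) / n)} := by
            ext ω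
            simp [hEdef, Set.mem_Ioc]
          rw [hIoc, FIoc P Xt F hXtmeas hatomXt hF (by positivity)
            (hdivmono _ _ (hprevcumle j)) (by
              rw [div_le_one hnR]
              exact_mod_cast hcum_le j)]
          have harith : (cum j : ℝ) / n - (prev j : ℝ) / n
              = ((Nat.card {i : Fin n // x i = v j} : ℝ)) / n := by
            rw [hprevcum j]
            push_cast
            ring
          rw [harith, ENNReal.ofReal_div_of_pos hnR]
          congr 1 <;> simp [ENNReal.ofReal_natCast]
        have hEUnion : E = ⋃ ℓ'' : Fin c, (E ∩ Lset ℓ'') := by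
          ext ω
          simp only [Set.mem_iUnion, Set.mem_inter_iff]
          constructor
          · intro h
            exact ⟨L ω, h, rfl⟩
          · rintro ⟨ℓ'', h, -⟩
            exact h
        have hdisj : Pairwise (Function.onFun Disjoint (fun ℓ'' => E ∩ Lset ℓ'')) := by
          intro a a' haa'
          apply Set.disjoint_left.2
          rintro ω ⟨-, h1⟩ ⟨-, h2⟩
          have e1 : L ω = a := h1
          have e2 : L ω = a' := h2
          exact haa' (e1.symm.trans e2)
        have hsum : P E = ∑ ℓ'' : Fin c, P (E ∩ Lset ℓ'') := by
          conv_lhs => rw [hEUnion]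
          rw [measure_iUnion hdisj (fun ℓ'' => hEmeas.inter (hLsetmeas ℓ''))]
          exact tsum_fintype _
        have hsingle : ∑ ℓ'' : Fin c, P (E ∩ Lset ℓ'') = P (E ∩ Lset ℓ) := by
          apply Finset.sum_eq_single ℓ
          · intro ℓ'' _ hℓ''
            exact hsubzero ℓ'' hℓ''
          · intro h
            exact absurd (Finset.mem_univ ℓ) h
        have hpveq : pv ℓ j = Nat.card {i : Fin n // x i = v j} := by
          apply ncard_congr
          intro i
          constructor
          · rintro ⟨-, hxi⟩
            exact hxi
          · intro hxi
            exact ⟨hown' j rfl i hxi, hxi⟩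
        rw [← hsingle, ← hsum, hPE, hpveq]
      · rw [hsubzero ℓ hll]
        have : pv ℓ j = 0 := by
          apply ncard_zero
          rintro i ⟨h1, hxi⟩
          exact hll (h1 ▸ hown' j rfl i hxi ▸ rfl)
        rw [this]
        simp
  calc P ({ω | G (F (Xt ω)) = v j} ∩ {ω | L ω = ℓ})
      = P (E ∩ Lset ℓ) := hLHSeq
    _ = (pv ℓ j : ℝ≥0∞) / n := key
    _ = ((pv ℓ j : ℝ≥0∞) / (Nc ℓ : ℝ≥0∞)) * ((Nc ℓ : ℝ≥0∞) / n) := (hcanc _ _).symm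
end

section
/- Let Z be a real random variable with continuous CDF F whose law is supported on the union of pairwise disjoint intervals I(1),…,I(m), ordered left to right, with P(Z ∈ I(i)) = p(i) and Σ p(i) = 1. Let v(1) < … < v(m) be reals with v(i) ∈ I(i), and let G be the generalized inverse of the CDF of the discrete measure Σ_i p(i) δ_{v(i)}. Then almost surely G(F(Z)) = v(i) on the event {Z ∈ I(i)}; in particular, the law of G(F(Z)) equals Σ_i p(i) δ_{v(i)}. -/
open MeasureTheory
open scoped ENNReal

private lemma supNull {Ω : Type*} [MeasurableSpace Ω] (μ : Measure Ω)
    (Z : Ω → ℝ) (A : Set Ω)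
    (hA : ∀ ω ∈ A, μ (A ∩ {ω' | Z ω' ≤ Z ω}) = 0) : μ A = 0 := by
  classical
  by_cases hmax : ∃ ω₀ ∈ A, ∀ ω ∈ A, Z ω ≤ Z ω₀
  · obtain ⟨ω₀, hω₀, hm⟩ := hmax
    have hsub : A ⊆ A ∩ {ω' | Z ω' ≤ Z ω₀} := fun ω hω => ⟨hω, hm ω hω⟩
    exact le_antisymm ((measure_mono hsub).trans (hA ω₀ hω₀).le) zero_le
  · push_neg at hmax
    set D : ℚ → Set Ω := fun q =>
      if ∃ ω' ∈ A, (q : ℝ) ≤ Z ω' then A ∩ {ω'' | Z ω'' ≤ (q : ℝ)} else ∅ with hD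
    have hDnull : ∀ q, μ (D q) = 0 := by
      intro q
      rw [hD]
      simp only []
      split_ifs with h
      · obtain ⟨ω', hω', hq⟩ := h
        refine le_antisymm ((measure_mono ?_).trans (hA ω' hω').le) zero_le
        exact fun ω'' h'' => ⟨h''.1, h''.2.trans hq⟩
      · simp
    have hcov : A ⊆ ⋃ q : ℚ, D q := by
      intro ω hω
      obtain ⟨ω', hω', hlt⟩ := hmax ω hω
      obtain ⟨q, hq1, hq2⟩ := exists_rat_btwn hlt
      refine Set.mem_iUnion.2 ⟨q, ?_⟩
      rw [hD]
      simp only []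
      rw [if_pos ⟨ω', hω', hq2.le⟩]
      exact ⟨hω, hq1.le⟩
    exact le_antisymm ((measure_mono hcov).trans (measure_iUnion_null hDnull).le) zero_le

private lemma atomNull {Ω : Type*} [MeasurableSpace Ω] (μ : Measure Ω) [IsProbabilityMeasure μ]
    (Z : Ω → ℝ) (hZ : Measurable Z)
    (F : ℝ → ℝ) (hF : ∀ x, F x = (μ {ω | Z ω ≤ x}).toReal) (hFcont : Continuous F)
    (c : ℝ) : μ {ω | Z ω = c} = 0 := by
  have msle : ∀ x : ℝ, MeasurableSet {ω | Z ω ≤ x} := fun x => hZ measurableSet_Iic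
  have hμF : ∀ x, μ {ω | Z ω ≤ x} = ENNReal.ofReal (F x) := fun x => by
    rw [hF]; exact (ENNReal.ofReal_toReal (measure_ne_top μ _)).symm
  refine le_antisymm ?_ zero_le
  refine ENNReal.le_of_forall_pos_le_add fun ε hε _ => ?_
  rw [zero_add]
  obtain ⟨δ, hδ, hδ'⟩ := Metric.continuousAt_iff.1 (hFcont.continuousAt (x := c)) ε
    (by exact_mod_cast hε)
  have hx : dist (c - δ/2) c < δ := by
    rw [Real.dist_eq, abs_of_nonpos (by linarith)]
    linarith
  have h2 : |F (c - δ/2) - F c| < ε := by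
    have := hδ' hx
    rwa [Real.dist_eq] at this
  have hsub : {ω | Z ω = c} ⊆ {ω | Z ω ≤ c} \ {ω | Z ω ≤ c - δ/2} := by
    intro ω hω
    simp only [Set.mem_setOf_eq] at hω
    constructor
    · simp [Set.mem_setOf_eq, hω]
    · simp only [Set.mem_setOf_eq, hω]; push_neg; linarith
  calc μ {ω | Z ω = c} ≤ μ ({ω | Z ω ≤ c} \ {ω | Z ω ≤ c - δ/2}) := measure_mono hsub
    _ = μ {ω | Z ω ≤ c} - μ {ω | Z ω ≤ c - δ/2} :=
        measure_diff (fun ω (h : Z ω ≤ c - δ/2) => h.trans (by linarith))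
          (msle _).nullMeasurableSet (measure_ne_top μ _)
    _ = ENNReal.ofReal (F c) - ENNReal.ofReal (F (c - δ/2)) := by rw [hμF, hμF]
    _ = ENNReal.ofReal (F c - F (c - δ/2)) := by
        rw [ENNReal.ofReal_sub _ (by rw [hF]; exact ENNReal.toReal_nonneg)]
    _ ≤ ENNReal.ofReal ε := by
        apply ENNReal.ofReal_le_ofReal
        have := abs_lt.1 h2
        linarith [this.1, this.2]
    _ = (ε : ℝ≥0∞) := ENNReal.ofReal_coe_nnreal

/-- Let `Z` have continuous CDF `F` with law supported on pairwise disjoint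
intervals `I 1, …, I m` ordered left to right, `P(Z ∈ I i) = p i`, `∑ p i = 1`, and let
`v i ∈ I i`.  If `G` is the generalized inverse of the CDF of the discrete measure
`∑ p i δ_{v i}`, then almost surely `G (F Z) = v i` on `{Z ∈ I i}`; in particular the law of
`G (F Z)` is `∑ p i δ_{v i}`. -/
theorem genInv_comp_cdf_eq_values
    {Ω : Type*} [MeasurableSpace Ω] (μ : Measure Ω) [IsProbabilityMeasure μ]
    (Z : Ω → ℝ) (hZ : Measurable Z) (m : ℕ)
    (I : Fin m → Set ℝ)
    (hIord : ∀ i j : Fin m, i < j → ∀ x ∈ I i, ∀ y ∈ I j, x < y)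
    (p : Fin m → ℝ) (hp : ∀ i, 0 ≤ p i) (hsum : ∑ i, p i = 1)
    (hpI : ∀ i, μ {ω | Z ω ∈ I i} = ENNReal.ofReal (p i))
    (v : Fin m → ℝ) (hv : StrictMono v) (hvI : ∀ i, v i ∈ I i)
    (F : ℝ → ℝ) (hF : ∀ x, F x = (μ {ω | Z ω ≤ x}).toReal) (hFcont : Continuous F)
    (G : ℝ → ℝ)
    (hG : ∀ u, G u = sInf {x : ℝ |
      u ≤ ∑ i ∈ Finset.univ.filter (fun i => v i ≤ x), p i}) :
    (∀ᵐ ω ∂μ, ∀ i, Z ω ∈ I i → G (F (Z ω)) = v i) ∧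
      Measure.map (fun ω => G (F (Z ω))) μ
        = ∑ i, ENNReal.ofReal (p i) • Measure.dirac (v i) := by
  classical
  -- m ≥ 1
  rcases Nat.eq_zero_or_pos m with hm0 | hmpos
  · exfalso; subst hm0; simpa using hsum
  -- basic F facts
  have msle : ∀ x : ℝ, MeasurableSet {ω | Z ω ≤ x} := fun x => hZ measurableSet_Iic
  have hμF : ∀ x, μ {ω | Z ω ≤ x} = ENNReal.ofReal (F x) := fun x => by
    rw [hF]; exact (ENNReal.ofReal_toReal (measure_ne_top μ _)).symm
  have Fmono : Monotone F := fun a b hab => by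
    rw [hF, hF]
    exact ENNReal.toReal_mono (measure_ne_top μ _)
      (measure_mono fun ω h => le_trans h hab)
  have Fnonneg : ∀ x, 0 ≤ F x := fun x => by rw [hF]; exact ENNReal.toReal_nonneg
  have Fle1 : ∀ x, F x ≤ 1 := fun x => by
    rw [hF]
    exact ENNReal.toReal_le_of_le_ofReal zero_le_one (by simpa using prob_le_one (μ := μ))
  have hatom : ∀ c : ℝ, μ {ω | Z ω = c} = 0 := atomNull μ Z hZ F hF hFcont
  have htotal : ∀ x : ℝ, μ {ω | Z ω ≤ x} + μ {ω | x < Z ω} = 1 := by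
    intro x
    have := measure_add_measure_compl (μ := μ) (msle x)
    rw [measure_univ] at this
    convert this using 3
    ext ω; simp [not_le]
  -- T facts
  set T : ℕ → ℝ := fun n => ∑ j ∈ Finset.univ.filter (fun j : Fin m => (j : ℕ) < n), p j
    with hT
  have T0 : T 0 = 0 := by simp [hT]
  have Tnonneg : ∀ n, 0 ≤ T n := fun n =>
    Finset.sum_nonneg fun j _ => hp j
  have Tsucc : ∀ k (hk : k < m), T (k + 1) = T k + p ⟨k, hk⟩ := by
    intro k hk
    rw [hT]
    simp only []
    have : Finset.univ.filter (fun j : Fin m => (j : ℕ) < k + 1)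
        = insert ⟨k, hk⟩ (Finset.univ.filter (fun j : Fin m => (j : ℕ) < k)) := by
      ext j
      simp only [Finset.mem_filter, Finset.mem_univ, true_and, Finset.mem_insert, Fin.ext_iff]
      omega
    rw [this, Finset.sum_insert (by simp)]
    ring
  have Tmono : Monotone T := by
    intro a b hab
    apply Finset.sum_le_sum_of_subset_of_nonneg
    · intro j hj
      simp only [Finset.mem_filter, Finset.mem_univ, true_and] at hj ⊢
      omega
    · exact fun j _ _ => hp j
  have Tm : ∀ n, m ≤ n → T n = 1 := by
    intro n hn
    rw [hT, ← hsum]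
    simp only []
    apply Finset.sum_congr
    · ext j
      simp only [Finset.mem_filter, Finset.mem_univ, true_and, iff_true]
      omega
    · intros; rfl
  have Tle1 : ∀ n, T n ≤ 1 := by
    intro n
    rcases le_or_gt m n with h | h
    · exact (Tm n h).le
    · rw [← Tm m le_rfl]; exact Tmono h.le

  -- sSup facts
  have hbdd : ∀ k (hk1 : k + 1 < m), BddAbove (I ⟨k, Nat.lt_of_succ_lt hk1⟩) := by
    intro k hk1
    exact ⟨v ⟨k+1, hk1⟩, fun y hy =>
      (hIord ⟨k, Nat.lt_of_succ_lt hk1⟩ ⟨k+1, hk1⟩ (by simp [Fin.lt_def]) y hy _ (hvI _)).le⟩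
  have hwub : ∀ k (hk1 : k + 1 < m), ∀ y ∈ I ⟨k, Nat.lt_of_succ_lt hk1⟩,
      y ≤ sSup (I ⟨k, Nat.lt_of_succ_lt hk1⟩) := fun k hk1 y hy => le_csSup (hbdd k hk1) hy
  have hwle : ∀ k (hk1 : k + 1 < m), ∀ y ∈ I ⟨k+1, hk1⟩,
      sSup (I ⟨k, Nat.lt_of_succ_lt hk1⟩) ≤ y := by
    intro k hk1 y hy
    exact csSup_le ⟨v ⟨k, Nat.lt_of_succ_lt hk1⟩, hvI _⟩ fun b hb =>
      (hIord _ _ (by simp [Fin.lt_def]) b hb y hy).le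
  -- L1 : lower bound for μ {Z ≤ x} with x above I_k
  have L1 : ∀ k (hk : k < m) (x : ℝ), (∀ y ∈ I ⟨k, hk⟩, y ≤ x) →
      ENNReal.ofReal (T (k + 1)) ≤ μ {ω | Z ω ≤ x} := by
    intro k
    induction k with
    | zero =>
      intro hk x hx
      rw [Tsucc 0 hk, T0, zero_add, ← hpI ⟨0, hk⟩]
      exact measure_mono fun ω hω => hx _ hω
    | succ k ih =>
      intro hk x hx
      have hk' : k < m := Nat.lt_of_succ_lt hk
      set w := sSup (I ⟨k, hk'⟩) with hw
      have hwx : w ≤ x := csSup_le ⟨v ⟨k, hk'⟩, hvI _⟩ fun b hb =>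
        (lt_of_lt_of_le (hIord ⟨k, hk'⟩ ⟨k+1, hk⟩ (by simp [Fin.lt_def]) b hb _ (hvI ⟨k+1, hk⟩))
          (hx _ (hvI _))).le
      have hsplit := measure_inter_add_diff (μ := μ) {ω | Z ω ≤ x} (msle w)
      have h1 : {ω | Z ω ≤ x} ∩ {ω | Z ω ≤ w} = {ω | Z ω ≤ w} :=
        Set.inter_eq_self_of_subset_right fun ω (h : Z ω ≤ w) => h.trans hwx
      have h2 : ENNReal.ofReal (T (k+1)) ≤ μ ({ω | Z ω ≤ x} ∩ {ω | Z ω ≤ w}) := by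
        rw [h1]; exact ih hk' w (hwub k hk)
      have hAsub : {ω | Z ω ∈ I ⟨k+1, hk⟩} \ {ω | Z ω = w} ⊆
          {ω | Z ω ≤ x} \ {ω | Z ω ≤ w} := by
        intro ω hω
        obtain ⟨h3, h4⟩ := hω
        have h5 : w ≤ Z ω := hwle k hk _ h3
        refine ⟨hx _ h3, ?_⟩
        simp only [Set.mem_setOf_eq] at h4 ⊢
        intro h6
        exact h4 (le_antisymm h6 h5)
      have h7 : ENNReal.ofReal (p ⟨k+1, hk⟩) ≤ μ ({ω | Z ω ≤ x} \ {ω | Z ω ≤ w}) := by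
        rw [← hpI ⟨k+1, hk⟩]
        calc μ {ω | Z ω ∈ I ⟨k+1, hk⟩}
            = μ ({ω | Z ω ∈ I ⟨k+1, hk⟩} \ {ω | Z ω = w}) := (measure_diff_null (hatom w)).symm
          _ ≤ μ ({ω | Z ω ≤ x} \ {ω | Z ω ≤ w}) := measure_mono hAsub
      calc ENNReal.ofReal (T (k+1+1))
          = ENNReal.ofReal (T (k+1)) + ENNReal.ofReal (p ⟨k+1, hk⟩) := by
            rw [← ENNReal.ofReal_add (Tnonneg _) (hp _), ← Tsucc (k+1) hk]
        _ ≤ μ ({ω | Z ω ≤ x} ∩ {ω | Z ω ≤ w}) + μ ({ω | Z ω ≤ x} \ {ω | Z ω ≤ w}) :=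
            add_le_add h2 h7
        _ = μ {ω | Z ω ≤ x} := hsplit
  -- L2 : lower bound for μ {x ≤ Z} with x below I_k
  have L2 : ∀ d k (hk : k < m), m ≤ k + d → ∀ x : ℝ, (∀ y ∈ I ⟨k, hk⟩, x ≤ y) →
      ENNReal.ofReal (1 - T k) ≤ μ {ω | x ≤ Z ω} := by
    intro d
    induction d with
    | zero => intro k hk hkd; omega
    | succ d ih =>
      intro k hk hkd x hx
      rcases eq_or_lt_of_le (Nat.succ_le_of_lt hk) with hlast | hk1
      · have h1 : 1 - T k = p ⟨k, hk⟩ := by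
          have h2 := Tsucc k hk
          have h3 := Tm (k+1) (le_of_eq hlast.symm)
          linarith
        rw [h1, ← hpI ⟨k, hk⟩]
        exact measure_mono fun ω hω => hx _ hω
      · set w := sSup (I ⟨k, hk⟩) with hw
        have hxw : x ≤ w := le_trans (hx _ (hvI ⟨k, hk⟩)) (hwub k hk1 _ (hvI _))
        have tmeas : MeasurableSet {ω | w ≤ Z ω} := hZ measurableSet_Ici
        have hsplit := measure_inter_add_diff (μ := μ) {ω | x ≤ Z ω} tmeas
        have h1 : {ω | x ≤ Z ω} ∩ {ω | w ≤ Z ω} = {ω | w ≤ Z ω} :=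
          Set.inter_eq_self_of_subset_right fun ω (h : w ≤ Z ω) => hxw.trans h
        have h2 : ENNReal.ofReal (1 - T (k+1)) ≤ μ ({ω | x ≤ Z ω} ∩ {ω | w ≤ Z ω}) := by
          rw [h1]; exact ih (k+1) hk1 (by omega) w (hwle k hk1)
        have hAsub : {ω | Z ω ∈ I ⟨k, hk⟩} \ {ω | Z ω = w} ⊆
            {ω | x ≤ Z ω} \ {ω | w ≤ Z ω} := by
          intro ω hω
          obtain ⟨h3, h4⟩ := hω
          have h5 : Z ω ≤ w := hwub k hk1 _ h3
          refine ⟨hx _ h3, ?_⟩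
          simp only [Set.mem_setOf_eq] at h4 ⊢
          intro h6
          exact h4 (le_antisymm h5 h6)
        have h7 : ENNReal.ofReal (p ⟨k, hk⟩) ≤ μ ({ω | x ≤ Z ω} \ {ω | w ≤ Z ω}) := by
          rw [← hpI ⟨k, hk⟩]
          calc μ {ω | Z ω ∈ I ⟨k, hk⟩}
              = μ ({ω | Z ω ∈ I ⟨k, hk⟩} \ {ω | Z ω = w}) := (measure_diff_null (hatom w)).symm
            _ ≤ μ ({ω | x ≤ Z ω} \ {ω | w ≤ Z ω}) := measure_mono hAsub
        calc ENNReal.ofReal (1 - T k)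
            = ENNReal.ofReal (1 - T (k+1)) + ENNReal.ofReal (p ⟨k, hk⟩) := by
              rw [← ENNReal.ofReal_add (by linarith [Tle1 (k+1)]) (hp _)]
              congr 1
              have := Tsucc k hk
              linarith
          _ ≤ μ ({ω | x ≤ Z ω} ∩ {ω | w ≤ Z ω}) + μ ({ω | x ≤ Z ω} \ {ω | w ≤ Z ω}) :=
              add_le_add h2 h7
          _ = μ {ω | x ≤ Z ω} := hsplit
  -- complement trick
  have compl : ∀ x t : ℝ, 0 ≤ t → t ≤ 1 → ENNReal.ofReal (1 - t) ≤ μ {ω | x ≤ Z ω} →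
      μ {ω | Z ω ≤ x} ≤ ENNReal.ofReal t := by
    intro x t ht0 ht1 hle
    have h1 : μ {ω | x ≤ Z ω} ≤ μ {ω | x < Z ω} := by
      calc μ {ω | x ≤ Z ω} ≤ μ ({ω | x < Z ω} ∪ {ω | Z ω = x}) := by
            apply measure_mono
            intro ω hω
            rcases lt_or_eq_of_le (show x ≤ Z ω from hω) with h | h
            · exact Or.inl h
            · exact Or.inr h.symm
        _ ≤ μ {ω | x < Z ω} + μ {ω | Z ω = x} := measure_union_le _ _
        _ = μ {ω | x < Z ω} := by rw [hatom, add_zero]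
    have h2 : μ {ω | Z ω ≤ x} = 1 - μ {ω | x < Z ω} :=
      ENNReal.eq_sub_of_add_eq (measure_ne_top μ _) (htotal x)
    rw [h2]
    calc 1 - μ {ω | x < Z ω} ≤ 1 - ENNReal.ofReal (1 - t) :=
          tsub_le_tsub_left (hle.trans h1) 1
      _ = ENNReal.ofReal t := by
          rw [← ENNReal.ofReal_one, ← ENNReal.ofReal_sub _ (by linarith)]
          norm_num
  -- exact boundary values
  have Fval : ∀ k (hk1 : k + 1 < m),
      μ {ω | Z ω ≤ sSup (I ⟨k, Nat.lt_of_succ_lt hk1⟩)} = ENNReal.ofReal (T (k+1)) := by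
    intro k hk1
    refine le_antisymm ?_ (L1 k (Nat.lt_of_succ_lt hk1) _ (hwub k hk1))
    exact compl _ (T (k+1)) (Tnonneg _) (Tle1 _) (L2 m (k+1) hk1 (by omega) _ (hwle k hk1))
  have hFw : ∀ k (hk1 : k + 1 < m), F (sSup (I ⟨k, Nat.lt_of_succ_lt hk1⟩)) = T (k+1) := by
    intro k hk1
    rw [hF, Fval k hk1]
    exact ENNReal.toReal_ofReal (Tnonneg _)
  -- value of G on (T i, T (i+1)]
  have Gval : ∀ (i : Fin m) (u : ℝ), T i.val < u → u ≤ T (i.val + 1) → G u = v i := by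
    intro i u h1 h2
    rw [hG]
    apply IsLeast.csInf_eq
    constructor
    · show u ≤ ∑ j ∈ Finset.univ.filter (fun j => v j ≤ v i), p j
      have hfe : Finset.univ.filter (fun j : Fin m => v j ≤ v i)
          = Finset.univ.filter (fun j : Fin m => (j : ℕ) < i.val + 1) := by
        apply Finset.filter_congr
        intro j _
        rw [hv.le_iff_le, Fin.le_def]
        simp [Nat.lt_succ_iff]
      rw [hfe]
      exact h2
    · intro x hx
      by_contra hlt
      push_neg at hlt
      have hsub : Finset.univ.filter (fun j : Fin m => v j ≤ x)
          ⊆ Finset.univ.filter (fun j : Fin m => (j : ℕ) < i.val) := by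
        intro j hj
        simp only [Finset.mem_filter, Finset.mem_univ, true_and] at hj ⊢
        exact hv.lt_iff_lt.mp (lt_of_le_of_lt hj hlt)
      have hle : ∑ j ∈ Finset.univ.filter (fun j : Fin m => v j ≤ x), p j ≤ T i.val :=
        Finset.sum_le_sum_of_subset_of_nonneg hsub fun j _ _ => hp j
      have hux : u ≤ ∑ j ∈ Finset.univ.filter (fun j : Fin m => v j ≤ x), p j := hx
      linarith
  -- existence of interval containing u
  have hex : ∀ u : ℝ, 0 < u → u ≤ 1 → ∃ i : Fin m, T i.val < u ∧ u ≤ T (i.val + 1) := by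
    intro u hu0 hu1
    have hm1 : m - 1 + 1 = m := by omega
    have hP : ∃ n, u ≤ T (n + 1) := ⟨m - 1, by rw [hm1, Tm m le_rfl]; exact hu1⟩
    have hkle : Nat.find hP ≤ m - 1 := Nat.find_min' hP
      (by rw [hm1, Tm m le_rfl]; exact hu1)
    have hkm : Nat.find hP < m := by omega
    refine ⟨⟨Nat.find hP, hkm⟩, ?_, Nat.find_spec hP⟩
    rcases Nat.eq_zero_or_pos (Nat.find hP) with h0 | hpos
    · simp only [h0]
      rw [T0]
      exact hu0
    · have hmin := Nat.find_min hP (Nat.sub_lt hpos one_pos)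
      push_neg at hmin
      have : Nat.find hP - 1 + 1 = Nat.find hP := by omega
      rwa [this] at hmin
  -- G on [0,1] as an explicit step function
  have hGpsi : ∀ u : ℝ, 0 ≤ u → u ≤ 1 →
      G u = ∑ i : Fin m, if T i.val < u ∧ u ≤ T (i.val + 1) then v i else 0 := by
    intro u hu0 hu1
    rcases eq_or_lt_of_le hu0 with h0 | hpos
    · have hset : {x : ℝ | u ≤ ∑ j ∈ Finset.univ.filter (fun j => v j ≤ x), p j}
          = Set.univ := by
        ext x
        simp only [Set.mem_setOf_eq, Set.mem_univ, iff_true]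
        rw [← h0]
        exact Finset.sum_nonneg fun j _ => hp j
      rw [hG, hset]
      have hnb : ¬ BddBelow (Set.univ : Set ℝ) := by
        rintro ⟨b, hb⟩
        have := hb (Set.mem_univ (b - 1))
        linarith
      rw [csInf_of_not_bddBelow hnb, Real.sInf_empty]
      symm
      apply Finset.sum_eq_zero
      intro i _
      rw [if_neg]
      rintro ⟨h1, -⟩
      rw [← h0] at h1
      exact absurd h1 (not_lt.2 (Tnonneg _))
    · obtain ⟨i, hi1, hi2⟩ := hex u hpos hu1
      rw [Gval i u hi1 hi2]
      symm
      have hs : (∑ j : Fin m, if T j.val < u ∧ u ≤ T (j.val + 1) then v j else 0)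
          = (if T i.val < u ∧ u ≤ T (i.val + 1) then v i else 0) := by
        apply Finset.sum_eq_single i
        · intro j _ hji
          rw [if_neg]
          rintro ⟨hj1, hj2⟩
          rcases lt_or_gt_of_ne (fun h => hji (Fin.ext h) : (j : ℕ) ≠ i.val) with h | h
          · have : T ((j : ℕ) + 1) ≤ T i.val := Tmono h
            linarith
          · have : T (i.val + 1) ≤ T (j : ℕ) := Tmono h
            linarith
        · intro h
          exact absurd (Finset.mem_univ i) h
      rw [hs, if_pos ⟨hi1, hi2⟩]
  -- null sets
  have null₀ : μ {ω | F (Z ω) ≤ 0} = 0 := by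
    apply supNull μ Z
    intro ω hω
    refine le_antisymm ?_ zero_le
    calc μ ({ω' | F (Z ω') ≤ 0} ∩ {ω' | Z ω' ≤ Z ω})
        ≤ μ {ω' | Z ω' ≤ Z ω} := measure_mono Set.inter_subset_right
      _ = ENNReal.ofReal (F (Z ω)) := hμF _
      _ = 0 := ENNReal.ofReal_eq_zero.mpr hω
  have nlow : ∀ k (hk1 : k + 1 < m),
      μ {ω | sSup (I ⟨k, Nat.lt_of_succ_lt hk1⟩) < Z ω ∧ F (Z ω) ≤ T (k+1)} = 0 := by
    intro k hk1
    apply supNull μ Z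
    intro ω hω
    obtain ⟨hw1, hw2⟩ := hω
    refine le_antisymm ?_ zero_le
    have hsub : {ω' | sSup (I ⟨k, Nat.lt_of_succ_lt hk1⟩) < Z ω' ∧ F (Z ω') ≤ T (k+1)}
          ∩ {ω' | Z ω' ≤ Z ω}
        ⊆ {ω' | Z ω' ≤ Z ω} \ {ω' | Z ω' ≤ sSup (I ⟨k, Nat.lt_of_succ_lt hk1⟩)} := by
      rintro ω' ⟨⟨h1, -⟩, h2⟩
      exact ⟨h2, not_le.2 h1⟩
    calc μ ({ω' | sSup (I ⟨k, Nat.lt_of_succ_lt hk1⟩) < Z ω' ∧ F (Z ω') ≤ T (k+1)}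
            ∩ {ω' | Z ω' ≤ Z ω})
        ≤ μ ({ω' | Z ω' ≤ Z ω} \ {ω' | Z ω' ≤ sSup (I ⟨k, Nat.lt_of_succ_lt hk1⟩)}) :=
          measure_mono hsub
      _ = μ {ω' | Z ω' ≤ Z ω} - μ {ω' | Z ω' ≤ sSup (I ⟨k, Nat.lt_of_succ_lt hk1⟩)} :=
          measure_diff (fun ω' (h : Z ω' ≤ _) => h.trans hw1.le)
            (msle _).nullMeasurableSet (measure_ne_top μ _)
      _ = ENNReal.ofReal (F (Z ω)) - ENNReal.ofReal (T (k+1)) := by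
          rw [hμF, Fval k hk1]
      _ = 0 := tsub_eq_zero_of_le (ENNReal.ofReal_le_ofReal hw2)
  set NS : Set Ω := {ω | F (Z ω) ≤ 0} ∪
      ⋃ (k : ℕ), ⋃ (hk1 : k + 1 < m),
        ({ω | Z ω = sSup (I ⟨k, Nat.lt_of_succ_lt hk1⟩)} ∪
         {ω | sSup (I ⟨k, Nat.lt_of_succ_lt hk1⟩) < Z ω ∧ F (Z ω) ≤ T (k+1)}) with hNSdef
  have hNS : μ NS = 0 := by
    rw [hNSdef]
    refine measure_union_null null₀ ?_
    refine measure_iUnion_null fun k => measure_iUnion_null fun hk1 => ?_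
    exact measure_union_null (hatom _) (nlow k hk1)
  -- pointwise bounds for part 1
  have part1 : ∀ ω, ω ∉ NS → ∀ i : Fin m, Z ω ∈ I i → G (F (Z ω)) = v i := by
    intro ω hω i hZI
    rw [hNSdef] at hω
    have hn0 : ¬ F (Z ω) ≤ 0 := fun h => hω (Set.mem_union_left _ h)
    have hn1 : ∀ k (hk1 : k + 1 < m), Z ω ≠ sSup (I ⟨k, Nat.lt_of_succ_lt hk1⟩) :=
      fun k hk1 h => hω (Set.mem_union_right _ (Set.mem_iUnion.2 ⟨k,
        Set.mem_iUnion.2 ⟨hk1, Set.mem_union_left _ h⟩⟩))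
    have hn2 : ∀ k (hk1 : k + 1 < m),
        ¬(sSup (I ⟨k, Nat.lt_of_succ_lt hk1⟩) < Z ω ∧ F (Z ω) ≤ T (k+1)) :=
      fun k hk1 h => hω (Set.mem_union_right _ (Set.mem_iUnion.2 ⟨k,
        Set.mem_iUnion.2 ⟨hk1, Set.mem_union_right _ h⟩⟩))
    have hub : F (Z ω) ≤ T (i.val + 1) := by
      rcases eq_or_lt_of_le (Nat.succ_le_of_lt i.isLt) with hlast | hk1
      · rw [Tm _ (le_of_eq hlast.symm)]
        exact Fle1 _
      · have hxle : ∀ y ∈ I ⟨i.val + 1, hk1⟩, Z ω ≤ y := fun y hy =>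
          (hIord i ⟨i.val + 1, hk1⟩ (by simp [Fin.lt_def]) _ hZI y hy).le
        have hc := compl (Z ω) (T (i.val + 1)) (Tnonneg _) (Tle1 _)
          (L2 m (i.val + 1) hk1 (by omega) _ hxle)
        rw [hμF] at hc
        exact (ENNReal.ofReal_le_ofReal_iff (Tnonneg _)).mp hc
    have hlb : T i.val < F (Z ω) := by
      rcases Nat.eq_zero_or_pos i.val with h0 | hpos
      · rw [h0, T0]
        exact lt_of_not_ge hn0
      · set k := i.val - 1 with hkdef
        have hik : i.val = k + 1 := by omega
        have hk1 : k + 1 < m := by omega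
        have hwZ : sSup (I ⟨k, Nat.lt_of_succ_lt hk1⟩) ≤ Z ω := by
          apply csSup_le ⟨v _, hvI _⟩
          intro b hb
          exact (hIord ⟨k, Nat.lt_of_succ_lt hk1⟩ i (by simp [Fin.lt_def]; omega) b hb _ hZI).le
        have hlt : sSup (I ⟨k, Nat.lt_of_succ_lt hk1⟩) < Z ω :=
          lt_of_le_of_ne hwZ (Ne.symm (hn1 k hk1))
        have hnot : ¬ F (Z ω) ≤ T (k + 1) := fun h => hn2 k hk1 ⟨hlt, h⟩
        rw [hik]
        exact lt_of_not_ge hnot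
    exact Gval i _ hlb hub
  -- step function ψ and interval events E
  set ψ : Ω → ℝ := fun ω => ∑ i : Fin m,
    if T i.val < F (Z ω) ∧ F (Z ω) ≤ T (i.val + 1) then v i else 0 with hψdef
  have hφψ : ∀ ω, G (F (Z ω)) = ψ ω := fun ω => hGpsi _ (Fnonneg _) (Fle1 _)
  have hFZmeas : Measurable fun ω => F (Z ω) := hFcont.measurable.comp hZ
  set E : Fin m → Set Ω := fun i =>
    {ω | T i.val < F (Z ω) ∧ F (Z ω) ≤ T (i.val + 1)} with hEdef
  have hEmeas : ∀ i, MeasurableSet (E i) := by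
    intro i
    have he : E i = (fun ω => F (Z ω)) ⁻¹' Set.Ioc (T i.val) (T (i.val + 1)) := rfl
    rw [he]
    exact hFZmeas measurableSet_Ioc
  have hψmeas : Measurable ψ := by
    rw [hψdef]
    apply Finset.measurable_sum
    intro i _
    exact Measurable.ite (hEmeas i) measurable_const measurable_const
  -- the "lower region" sets
  set SL : ℕ → Set Ω := fun k =>
    if h : 0 < k ∧ k < m then {ω | Z ω ≤ sSup (I ⟨k - 1, by omega⟩)}
    else if k = 0 then ∅ else Set.univ with hSLdef
  have hSL0 : SL 0 = ∅ := by rw [hSLdef]; simp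
  have hSLm : ∀ n, m ≤ n → 0 < n → SL n = Set.univ := by
    intro n h1 h2
    rw [hSLdef]
    simp only []
    rw [dif_neg (by omega), if_neg (by omega)]
  have hSLsucc : ∀ k (hk1 : k + 1 < m),
      SL (k + 1) = {ω | Z ω ≤ sSup (I ⟨k, Nat.lt_of_succ_lt hk1⟩)} := by
    intro k hk1
    rw [hSLdef]
    simp only []
    rw [dif_pos ⟨Nat.succ_pos k, hk1⟩]
    rfl
  have hSLmeas : ∀ k, MeasurableSet (SL k) := by
    intro k
    rw [hSLdef]
    simp only []
    split_ifs
    exacts [msle _, MeasurableSet.empty, MeasurableSet.univ]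
  have hSLμ : ∀ k, k ≤ m → μ (SL k) = ENNReal.ofReal (T k) := by
    intro k hkm
    rcases k with _ | j
    · rw [hSL0, T0]; simp
    · rcases eq_or_lt_of_le hkm with heq | hlt
      · rw [hSLm (j+1) (le_of_eq heq.symm) (Nat.succ_pos j), heq, Tm m le_rfl]
        simp [measure_univ]
      · rw [hSLsucc j hlt]
        exact Fval j hlt
  have hSLmono : ∀ k, k + 1 ≤ m → SL k ⊆ SL (k + 1) := by
    intro k hk1m
    rcases k with _ | j
    · rw [hSL0]; exact Set.empty_subset _
    · rcases eq_or_lt_of_le hk1m with heq | hlt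
      · rw [hSLm (j+1+1) (le_of_eq heq.symm) (by omega)]
        exact Set.subset_univ _
      · rw [hSLsucc j (by omega), hSLsucc (j+1) hlt]
        intro ω hω
        simp only [Set.mem_setOf_eq] at hω ⊢
        refine le_trans hω ?_
        apply csSup_le ⟨v ⟨j, by omega⟩, hvI _⟩
        intro b hb
        calc b ≤ v ⟨j+1, by omega⟩ :=
              (hIord ⟨j, by omega⟩ ⟨j+1, by omega⟩ (by simp [Fin.lt_def]) b hb _ (hvI _)).le
          _ ≤ sSup (I ⟨j+1, Nat.lt_of_succ_lt hlt⟩) := le_csSup (hbdd (j+1) hlt) (hvI _)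
  -- measure of the interval events
  have hEeq : ∀ i : Fin m, μ (E i) = ENNReal.ofReal (p i) := by
    intro i
    have hDμ : μ (SL (i.val + 1) \ SL i.val) = ENNReal.ofReal (p i) := by
      rw [measure_diff (hSLmono i.val i.isLt) (hSLmeas _).nullMeasurableSet
        (measure_ne_top μ _), hSLμ (i.val + 1) i.isLt, hSLμ i.val (le_of_lt i.isLt),
        ← ENNReal.ofReal_sub _ (Tnonneg _)]
      congr 1
      have ht := Tsucc i.val i.isLt
      rw [Fin.eta] at ht
      linarith
    have hED : E i ⊆ (SL (i.val + 1) \ SL i.val) ∪ NS := by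
      intro ω hω
      obtain ⟨h1, h2⟩ := hω
      by_cases hNSmem : ω ∈ NS
      · exact Or.inr hNSmem
      left
      constructor
      · rcases eq_or_lt_of_le (Nat.succ_le_of_lt i.isLt) with hlast | hk1
        · rw [hSLm _ (le_of_eq hlast.symm) (Nat.succ_pos _)]
          exact Set.mem_univ ω
        · rw [hSLsucc i.val hk1]
          simp only [Set.mem_setOf_eq]
          by_contra hgt
          push_neg at hgt
          exact hNSmem (by
            rw [hNSdef]
            exact Set.mem_union_right _ (Set.mem_iUnion.2 ⟨i.val, Set.mem_iUnion.2 ⟨hk1,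
              Set.mem_union_right _ ⟨hgt, h2⟩⟩⟩))
      · rcases Nat.eq_zero_or_pos i.val with h0 | hpos
        · rw [h0, hSL0]
          exact Set.notMem_empty ω
        · have hk1 : (i.val - 1) + 1 < m := by omega
          have hiv : i.val - 1 + 1 = i.val := by omega
          rw [← hiv, hSLsucc (i.val - 1) hk1]
          intro hle
          have hm2 := Fmono hle
          rw [hFw (i.val - 1) hk1, hiv] at hm2
          exact absurd (lt_of_lt_of_le h1 hm2) (lt_irrefl _)
    have hDE : (SL (i.val + 1) \ SL i.val) ⊆ E i ∪ NS := by
      intro ω hω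
      obtain ⟨hin, hnotin⟩ := hω
      by_cases hNSmem : ω ∈ NS
      · exact Or.inr hNSmem
      left
      constructor
      · rcases Nat.eq_zero_or_pos i.val with h0 | hpos
        · rw [h0, T0]
          by_contra hle
          push_neg at hle
          exact hNSmem (by rw [hNSdef]; exact Set.mem_union_left _ hle)
        · have hk1 : (i.val - 1) + 1 < m := by omega
          have hiv : i.val - 1 + 1 = i.val := by omega
          rw [← hiv, hSLsucc (i.val - 1) hk1] at hnotin
          have hgt : sSup (I ⟨i.val - 1, Nat.lt_of_succ_lt hk1⟩) < Z ω := not_le.mp hnotin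
          by_contra hle
          push_neg at hle
          refine hNSmem (by
            rw [hNSdef]
            exact Set.mem_union_right _ (Set.mem_iUnion.2 ⟨i.val - 1, Set.mem_iUnion.2 ⟨hk1,
              Set.mem_union_right _ ⟨hgt, by rw [hiv]; exact hle⟩⟩⟩))
      · rcases eq_or_lt_of_le (Nat.succ_le_of_lt i.isLt) with hlast | hk1
        · rw [Tm _ (le_of_eq hlast.symm)]
          exact Fle1 _
        · rw [hSLsucc i.val hk1] at hin
          have hm2 := Fmono hin
          rwa [hFw i.val hk1] at hm2
    refine le_antisymm ?_ ?_
    · calc μ (E i) ≤ μ ((SL (i.val + 1) \ SL i.val) ∪ NS) := measure_mono hED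
        _ ≤ μ (SL (i.val + 1) \ SL i.val) + μ NS := measure_union_le _ _
        _ = ENNReal.ofReal (p i) := by rw [hNS, add_zero, hDμ]
    · calc ENNReal.ofReal (p i) = μ (SL (i.val + 1) \ SL i.val) := hDμ.symm
        _ ≤ μ (E i ∪ NS) := measure_mono hDE
        _ ≤ μ (E i) + μ NS := measure_union_le _ _
        _ = μ (E i) := by rw [hNS, add_zero]
  -- disjointness of the E i
  have hEdisj : Pairwise (Function.onFun Disjoint E) := by
    intro i j hij
    rw [Function.onFun, Set.disjoint_left]
    intro ω hi hj
    obtain ⟨hi1, hi2⟩ := hi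
    obtain ⟨hj1, hj2⟩ := hj
    rcases lt_or_gt_of_ne (fun h => hij (Fin.ext h) : (i : ℕ) ≠ (j : ℕ)) with h | h
    · have := Tmono (show (i : ℕ) + 1 ≤ (j : ℕ) from h)
      linarith
    · have := Tmono (show (j : ℕ) + 1 ≤ (i : ℕ) from h)
      linarith
  -- conclusion
  constructor
  · filter_upwards [measure_eq_zero_iff_ae_notMem.mp hNS] with ω hω
    exact part1 ω hω
  · have hfun : (fun ω => G (F (Z ω))) = ψ := funext hφψ
    rw [hfun]
    refine Measure.ext fun S hS => ?_
    rw [Measure.map_apply hψmeas hS]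
    have hU : MeasurableSet (⋃ i, E i) := MeasurableSet.iUnion hEmeas
    have hsplit := measure_inter_add_diff (μ := μ) (ψ ⁻¹' S) hU
    have hdiff0 : μ (ψ ⁻¹' S \ ⋃ i, E i) = 0 := by
      refine measure_mono_null ?_ null₀
      intro ω hω
      obtain ⟨-, hω2⟩ := hω
      by_contra h
      simp only [Set.mem_setOf_eq] at h
      obtain ⟨i, hi1, hi2⟩ := hex (F (Z ω)) (lt_of_not_ge h) (Fle1 _)
      exact hω2 (Set.mem_iUnion.2 ⟨i, ⟨hi1, hi2⟩⟩)
    have hvE : ∀ i : Fin m, ∀ ω ∈ E i, ψ ω = v i := by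
      intro i ω hω
      rw [← hφψ ω]
      exact Gval i _ hω.1 hω.2
    have hinterE : ∀ i : Fin m, ψ ⁻¹' S ∩ E i = if v i ∈ S then E i else ∅ := by
      intro i
      split_ifs with hvS
      · ext ω
        constructor
        · rintro ⟨-, h2⟩
          exact h2
        · intro h
          exact ⟨by rw [Set.mem_preimage, hvE i ω h]; exact hvS, h⟩
      · ext ω
        simp only [Set.mem_inter_iff, Set.mem_empty_iff_false, iff_false, not_and]
        intro h1 h2
        rw [Set.mem_preimage, hvE i ω h2] at h1
        exact hvS h1
    have hdisj2 : Pairwise (Function.onFun Disjoint fun i => ψ ⁻¹' S ∩ E i) :=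
      fun i j hij => (hEdisj hij).mono Set.inter_subset_right Set.inter_subset_right
    have hmain : μ (ψ ⁻¹' S) = ∑ i : Fin m, if v i ∈ S then ENNReal.ofReal (p i) else 0 := by
      rw [← hsplit, hdiff0, add_zero, Set.inter_iUnion,
        measure_iUnion hdisj2 (fun i => (hψmeas hS).inter (hEmeas i)), tsum_fintype]
      apply Finset.sum_congr rfl
      intro i _
      rw [hinterE i]
      split_ifs with hvS
      · exact hEeq i
      · exact measure_empty
    rw [hmain, Measure.finset_sum_apply]
    apply Finset.sum_congr rfl
    intro i _
    rw [Measure.smul_apply, Measure.dirac_apply' _ hS, smul_eq_mul]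
    by_cases hvS : v i ∈ S
    · simp [Set.indicator, hvS]
    · simp [Set.indicator, hvS]
end

section
/- Let (Ω, P) be a probability space carrying a random variable X with values in a finite set 𝒳 and random variables E and M with values in {0,1}. Assume positivity: P(X = x, M = m) > 0 and P(E = 1, M = m) > 0 for all x ∈ 𝒳 and m ∈ {0,1}. Assume E and M are conditionally independent given X, in the sense that P(E = 1 | X = x, M = m) = P(E = 1 | X = x) for all x and m. Then for every x ∈ 𝒳, P(X = x | E = 1, M = 1) = [P(E = 1 | M = 0) / P(E = 1 | M = 1)] · P(X = x | E = 1, M = 0) · [P(X = x | M = 1) / P(X = x | M = 0)]; i.e., the enrolled-population distribution in the new market is proportional to the enrolled-population distribution in the existing market times the ratio of market covariate distributions, with proportionality constant independent of x. -/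
open MeasureTheory

/-- Market-shift Bayes identity: if `E` and `M` are conditionally
independent given `X` (i.e. `P(E=1 | X=x, M=m) = P(E=1 | X=x)`), then the enrolled
distribution in the new market satisfies
`P(X=x | E=1, M=1) = [P(E=1|M=0)/P(E=1|M=1)] · P(X=x | E=1, M=0) · [P(X=x|M=1)/P(X=x|M=0)]`. -/
theorem enrolled_distribution_market_shift
    {Ω 𝓧 : Type*} [MeasurableSpace Ω] [Fintype 𝓧]
    (P : Measure Ω) [IsProbabilityMeasure P]
    (X : Ω → 𝓧) (E M : Ω → Fin 2)
    (hposXM : ∀ (x : 𝓧) (m : Fin 2), 0 < (P {ω | X ω = x ∧ M ω = m}).toReal)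
    (hposEM : ∀ m : Fin 2, 0 < (P {ω | E ω = 1 ∧ M ω = m}).toReal)
    (hcondindep : ∀ (x : 𝓧) (m : Fin 2),
      (P {ω | E ω = 1 ∧ X ω = x ∧ M ω = m}).toReal / (P {ω | X ω = x ∧ M ω = m}).toReal
        = (P {ω | E ω = 1 ∧ X ω = x}).toReal / (P {ω | X ω = x}).toReal) :
    ∀ x : 𝓧,
      (P {ω | X ω = x ∧ E ω = 1 ∧ M ω = 1}).toReal / (P {ω | E ω = 1 ∧ M ω = 1}).toReal
        = (((P {ω | E ω = 1 ∧ M ω = 0}).toReal / (P {ω | M ω = 0}).toReal)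
            / ((P {ω | E ω = 1 ∧ M ω = 1}).toReal / (P {ω | M ω = 1}).toReal))
          * ((P {ω | X ω = x ∧ E ω = 1 ∧ M ω = 0}).toReal
              / (P {ω | E ω = 1 ∧ M ω = 0}).toReal)
          * (((P {ω | X ω = x ∧ M ω = 1}).toReal / (P {ω | M ω = 1}).toReal)
              / ((P {ω | X ω = x ∧ M ω = 0}).toReal / (P {ω | M ω = 0}).toReal)) := by
  intro x
  have hset : ∀ m : Fin 2, {ω | X ω = x ∧ E ω = 1 ∧ M ω = m}
      = {ω | E ω = 1 ∧ X ω = x ∧ M ω = m} := by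
    intro m; ext ω; simp only [Set.mem_setOf_eq]; tauto
  set a0 := (P {ω | E ω = 1 ∧ X ω = x ∧ M ω = 0}).toReal with ha0
  set a1 := (P {ω | E ω = 1 ∧ X ω = x ∧ M ω = 1}).toReal with ha1
  set b0 := (P {ω | X ω = x ∧ M ω = 0}).toReal with hb0
  set b1 := (P {ω | X ω = x ∧ M ω = 1}).toReal with hb1
  set e0 := (P {ω | E ω = 1 ∧ M ω = 0}).toReal with he0
  set e1 := (P {ω | E ω = 1 ∧ M ω = 1}).toReal with he1
  set m0 := (P {ω | M ω = 0}).toReal with hm0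
  set m1 := (P {ω | M ω = 1}).toReal with hm1
  have hb0p := hposXM x 0
  have hb1p := hposXM x 1
  have he0p := hposEM 0
  have he1p := hposEM 1
  have hμ : ∀ m : Fin 2, 0 < (P {ω | M ω = m}).toReal := by
    intro m
    refine lt_of_lt_of_le (hposXM x m) ?_
    exact ENNReal.toReal_mono (measure_ne_top P _) (measure_mono fun ω h => h.2)
  have hm0p := hμ 0
  have hm1p := hμ 1
  have key : a1 * b0 = a0 * b1 := by
    have h := (hcondindep x 1).trans (hcondindep x 0).symm
    rw [div_eq_div_iff hb1p.ne' hb0p.ne'] at h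
    linarith [h]
  rw [hset 1, hset 0]
  rw [← ha1, ← ha0]
  have hb0n : b0 ≠ 0 := hb0p.ne'
  have hb1n : b1 ≠ 0 := hb1p.ne'
  have he0n : e0 ≠ 0 := he0p.ne'
  have he1n : e1 ≠ 0 := he1p.ne'
  have hm0n : m0 ≠ 0 := hm0p.ne'
  have hm1n : m1 ≠ 0 := hm1p.ne'
  rw [div_eq_iff he1n]
  field_simp
  linear_combination key
end
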